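/- arXiv:1605.07881 — 11 statements merged into one kernel-verified Lean document; each statement's English description precedes it below -/
import Mathlib

section
/- Let V = {π₁(x) : x ∈ Λ, π₂(x) ∈ W} be a d-dimensional cut-and-project set with convex window W. Then for every finite family F of convex subsets of ℝ^d with at least 2^{d+k} members, if every 2^{d+k} members of F have a common point belonging to V, then all members of F have a common point belonging to V (i.e. the Helly number of V is at most 2^{d+k}). -/
open Finset

noncomputable section

private def icast {n : ℕ} (c : Fin n → ℤ) : Fin n → ℝ := fun j => (c j : ℝ)
private def idot {n : ℕ} (a y : Fin n → ℤ) : ℤ := ∑ j, a j * y j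

private lemma sep {n : ℕ} (S : Finset (Fin n → ℤ)) (z : Fin n → ℤ)
    (hz : icast z ∉ convexHull ℝ (icast '' (S : Set (Fin n → ℤ)))) :
    ∃ (a : Fin n → ℤ) (b : ℤ), (∀ y ∈ S, idot a y ≤ b) ∧ b + 1 ≤ idot a z := by
  classical
  rcases S.eq_empty_or_nonempty with rfl | hS
  · exact ⟨0, -1, by simp, by simp [idot]⟩
  have hconv : Convex ℝ (convexHull ℝ (icast '' (S : Set (Fin n → ℤ)))) :=
    convex_convexHull _ _
  have hcl : IsClosed (convexHull ℝ (icast '' (S : Set (Fin n → ℤ)))) :=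
    (S.finite_toSet.image _).isClosed_convexHull (𝕜 := ℝ)
  obtain ⟨f, u, hfu, huz⟩ := geometric_hahn_banach_closed_point hconv hcl hz
  -- coordinates of f
  set c : Fin n → ℝ := fun j => f (fun j' => if j = j' then 1 else 0) with hc
  have hf : ∀ v : Fin n → ℝ, f v = ∑ j, v j * c j := by
    intro v
    conv_lhs => rw [pi_eq_sum_univ v]
    rw [map_sum]
    refine Finset.sum_congr rfl fun j _ => ?_
    rw [map_smul, smul_eq_mul]
  -- gaps
  have hgap : ∀ y ∈ S, f (icast y) < f (icast z) := by
    intro y hy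
    exact lt_trans (hfu _ (subset_convexHull ℝ _ ⟨y, hy, rfl⟩)) huz
  obtain ⟨δ, hδpos, hδle⟩ : ∃ δ : ℝ, 0 < δ ∧ ∀ y ∈ S, δ ≤ f (icast z) - f (icast y) := by
    refine ⟨(S.image (fun y => f (icast z) - f (icast y))).min' (by simp [hS]), ?_, ?_⟩
    · obtain ⟨y, hy, hyeq⟩ := Finset.mem_image.1
        (Finset.min'_mem (S.image (fun y => f (icast z) - f (icast y))) (by simp [hS]))
      rw [← hyeq]
      linarith [hgap y hy]
    · intro y hy
      exact Finset.min'_le _ _ (Finset.mem_image_of_mem _ hy)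
  -- size bound
  obtain ⟨B, hBle⟩ : ∃ B : ℝ, ∀ y ∈ S, (∑ j, |(y j : ℝ)|) ≤ B :=
    ⟨(S.image (fun y : Fin n → ℤ => ∑ j, |(y j : ℝ)|)).max' (by simp [hS]),
      fun y hy => Finset.le_max' (S.image (fun y : Fin n → ℤ => ∑ j, |(y j : ℝ)|)) _
        (Finset.mem_image_of_mem _ hy)⟩
  set Bz : ℝ := ∑ j, |(z j : ℝ)| with hBz
  obtain ⟨N, hN⟩ := exists_nat_gt ((Bz + B) / 2 / δ)
  have hNδ : (Bz + B) / 2 < N * δ := by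
    rw [div_lt_iff₀ hδpos] at hN; linarith
  -- rounded functional
  set a : Fin n → ℤ := fun j => round ((N : ℝ) * c j) with ha
  have key : ∀ v : Fin n → ℤ, |(idot a v : ℝ) - N * f (icast v)| ≤ (∑ j, |(v j : ℝ)|) / 2 := by
    intro v
    rw [hf]
    have : (idot a v : ℝ) - N * (∑ j, icast v j * c j)
        = ∑ j, ((a j : ℝ) - N * c j) * (v j : ℝ) := by
      simp only [idot, Int.cast_sum, Int.cast_mul, Finset.mul_sum, ← Finset.sum_sub_distrib]
      congr 1; ext j; simp [icast]; ring
    rw [this]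
    calc |∑ j, ((a j : ℝ) - N * c j) * (v j : ℝ)| ≤ ∑ j, |((a j : ℝ) - N * c j) * (v j : ℝ)| :=
          Finset.abs_sum_le_sum_abs _ _
      _ ≤ ∑ j, (1/2) * |(v j : ℝ)| := by
          apply Finset.sum_le_sum
          intro j _
          rw [abs_mul]
          apply mul_le_mul_of_nonneg_right _ (abs_nonneg _)
          rw [ha, one_div, ← abs_neg, neg_sub]
          simpa using abs_sub_round ((N : ℝ) * c j)
      _ = (∑ j, |(v j : ℝ)|) / 2 := by rw [← Finset.mul_sum]; ring
  have main : ∀ y ∈ S, idot a y + 1 ≤ idot a z := by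
    intro y hy
    have h1 := key y
    have h2 := key z
    have h3 : (N : ℝ) * f (icast z) - N * f (icast y) ≥ N * δ := by
      have := hδle y hy
      have hN0 : (0:ℝ) ≤ N := Nat.cast_nonneg N
      nlinarith
    have h4 : (idot a z : ℝ) - idot a y > 0 := by
      have hy' := hBle y hy
      have := abs_le.1 h1
      have := abs_le.1 h2
      nlinarith
    have : (idot a y : ℝ) < idot a z := by linarith
    exact_mod_cast Int.add_one_le_iff.mpr (by exact_mod_cast this)
  refine ⟨a, (S.image (idot a)).max' (by simp [hS]), ?_, ?_⟩
  · intro y hy; exact Finset.le_max' _ _ (Finset.mem_image_of_mem _ hy)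
  · obtain ⟨y, hy, hyeq⟩ := Finset.mem_image.1 (Finset.max'_mem (S.image (idot a)) (by simp [hS]))
    rw [← hyeq]
    exact main y hy


private lemma lat_finite {n : ℕ} (T : Set (Fin n → ℝ)) (Y : Finset (Fin n → ℤ))
    (hT : T ⊆ convexHull ℝ (icast '' (Y : Set (Fin n → ℤ)))) :
    {c : Fin n → ℤ | icast c ∈ T}.Finite := by
  classical
  rcases Y.eq_empty_or_nonempty with rfl | hY
  · have he : convexHull ℝ (icast '' ((∅ : Finset (Fin n → ℤ)) : Set (Fin n → ℤ))) = ∅ := by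
      simp
    rw [he, Set.subset_empty_iff] at hT
    refine Set.Finite.subset (Set.finite_empty) ?_
    intro c hc
    simp only [Set.mem_setOf_eq, hT] at hc
    exact hc
  · obtain ⟨lo, hlo⟩ : ∃ lo : Fin n → ℤ, ∀ y ∈ Y, ∀ j, lo j ≤ y j := by
      refine ⟨fun j => (Y.image (fun y => y j)).min' (hY.image _), ?_⟩
      intro y hy j
      exact Finset.min'_le _ _ (Finset.mem_image_of_mem _ hy)
    obtain ⟨hi, hhi⟩ : ∃ hi : Fin n → ℤ, ∀ y ∈ Y, ∀ j, y j ≤ hi j := by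
      refine ⟨fun j => (Y.image (fun y => y j)).max' (hY.image _), ?_⟩
      intro y hy j
      exact Finset.le_max' (Y.image (fun y => y j)) _ (Finset.mem_image_of_mem _ hy)
    have hbox : convexHull ℝ (icast '' (Y : Set (Fin n → ℤ)))
        ⊆ Set.pi Set.univ (fun j => Set.Icc ((lo j : ℝ)) ((hi j : ℝ))) := by
      apply convexHull_min
      · rintro v ⟨y, hy, rfl⟩ j _
        simp only [Set.mem_Icc]
        constructor
        · show (lo j : ℝ) ≤ (y j : ℝ)
          exact_mod_cast hlo y hy j
        · show (y j : ℝ) ≤ (hi j : ℝ)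
          exact_mod_cast hhi y hy j
      · exact convex_pi (fun j _ => convex_Icc _ _)
    apply Set.Finite.subset (Set.Finite.pi (fun j => Set.finite_Icc (lo j) (hi j)))
    intro c hc
    have hc2 := hbox (hT hc)
    intro j _
    have h := hc2 j (Set.mem_univ j)
    simp only [Set.mem_Icc] at h ⊢
    have h1 : (lo j : ℝ) ≤ (c j : ℝ) := h.1
    have h2 : (c j : ℝ) ≤ (hi j : ℝ) := h.2
    exact ⟨by exact_mod_cast h1, by exact_mod_cast h2⟩

theorem doignon_s0 {n : ℕ} {ι : Type} [Fintype ι] (A : ι → Set (Fin n → ℝ))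
    (hA : ∀ i, Convex ℝ (A i)) (hcard : 2 ^ n ≤ Fintype.card ι)
    (hH : ∀ G : Finset ι, G.card = 2 ^ n → ∃ c : Fin n → ℤ, ∀ i ∈ G, icast c ∈ A i) :
    ∃ c : Fin n → ℤ, ∀ i, icast c ∈ A i := by
  classical
  by_contra hcon
  push_neg at hcon
  choose iota hiota using hcon
  -- witnesses for all 2^n subsets
  have hwit : ∀ G : Finset ι, ∃ c : Fin n → ℤ, G.card = 2 ^ n → ∀ i ∈ G, icast c ∈ A i := by
    intro G
    by_cases h : G.card = 2 ^ n
    · obtain ⟨c, hc⟩ := hH G h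
      exact ⟨c, fun _ => hc⟩
    · exact ⟨0, fun h' => absurd h' h⟩
  choose y hy using hwit
  set Y : Finset (Fin n → ℤ) := Finset.univ.image y with hYdef
  set T : Set (Fin n → ℝ) := convexHull ℝ (icast '' (Y : Set (Fin n → ℤ))) with hTdef
  have hTfin := lat_finite T Y (le_refl _)
  set Lf : Finset (Fin n → ℤ) := hTfin.toFinset with hLf
  have hLmem : ∀ c : Fin n → ℤ, c ∈ Lf ↔ icast c ∈ T := by
    intro c; rw [hLf, Set.Finite.mem_toFinset]; rfl
  have hYL : ∀ G : Finset ι, y G ∈ Lf := by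
    intro G
    rw [hLmem]
    exact subset_convexHull ℝ _ ⟨y G, by simp [hYdef], rfl⟩
  have hLne : Lf.Nonempty := ⟨y ∅, hYL ∅⟩
  -- midpoint closure
  have hmid : ∀ u v w : Fin n → ℤ, u ∈ Lf → v ∈ Lf → (∀ j, u j + v j = 2 * w j) → w ∈ Lf := by
    intro u v w hu hv hw
    rw [hLmem] at hu hv ⊢
    have : icast w = (1/2 : ℝ) • icast u + (1/2 : ℝ) • icast v := by
      ext j
      have := hw j
      have : ((u j : ℝ)) + (v j : ℝ) = 2 * (w j : ℝ) := by exact_mod_cast this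
      simp [icast]
      linarith
    rw [this]
    exact (convex_convexHull ℝ _) hu hv (by norm_num) (by norm_num) (by norm_num)
  -- separating constraints for each lattice point in Lf
  have hsep : ∀ z : Fin n → ℤ,
      ∃ (a : Fin n → ℤ) (b : ℤ),
        (∀ y' ∈ Lf.filter (fun y' => icast y' ∈ A (iota z)), idot a y' ≤ b) ∧ b + 1 ≤ idot a z := by
    intro z
    apply sep
    intro hmem
    apply hiota z
    have hsub : icast '' ((Lf.filter (fun y' => icast y' ∈ A (iota z)) : Finset (Fin n → ℤ)) :
        Set (Fin n → ℤ)) ⊆ A (iota z) := by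
      rintro v ⟨y', hy', rfl⟩
      simp only [Finset.coe_filter, Set.mem_setOf_eq] at hy'
      exact hy'.2
    exact convexHull_min hsub (hA _) hmem
  choose a b hb1 hb2 using hsep
  -- the "satisfies all constraints in R at level β" predicate
  set Sat : Finset (Fin n → ℤ) → ((Fin n → ℤ) → ℤ) → (Fin n → ℤ) → Prop :=
    fun R β y' => ∀ z ∈ R, idot (a z) y' ≤ β z with hSat
  -- Lf itself is an infeasible system
  have hLinf : ¬ ∃ y' ∈ Lf, Sat Lf b y' := by
    rintro ⟨y', hy', hsat⟩
    have := hsat y' hy'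
    have := hb2 y'
    omega
  -- minimal infeasible subsystem R
  obtain ⟨R, hRmem, hRmin⟩ := Finset.exists_min_image
    (Lf.powerset.filter (fun R => ¬ ∃ y' ∈ Lf, Sat R b y')) Finset.card
    ⟨Lf, by simp only [Finset.mem_filter, Finset.mem_powerset]; exact ⟨le_refl _, hLinf⟩⟩
  simp only [Finset.mem_filter, Finset.mem_powerset] at hRmem
  obtain ⟨hRsub, hRinf⟩ := hRmem
  have hRwit : ∀ z ∈ R, ∃ w ∈ Lf, Sat (R.erase z) b w := by
    intro z hz
    by_contra hne
    have hmem : R.erase z ∈ Lf.powerset.filter (fun R => ¬ ∃ y' ∈ Lf, Sat R b y') := by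
      simp only [Finset.mem_filter, Finset.mem_powerset]
      exact ⟨(Finset.erase_subset _ _).trans hRsub, hne⟩
    have := hRmin _ hmem
    have := Finset.card_erase_lt_of_mem hz
    omega
  -- upper bounds on each functional over Lf
  have hMex : ∀ z : Fin n → ℤ, ∃ M : ℤ, ∀ y' ∈ Lf, idot (a z) y' ≤ M := by
    intro z
    refine ⟨(Lf.image (idot (a z))).max' (hLne.image _), ?_⟩
    intro y' hy'
    exact Finset.le_max' (Lf.image (idot (a z))) _ (Finset.mem_image_of_mem _ hy')
  choose M hMle using hMex
  -- maximize the sum of levels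
  have hbdd : ∃ bnd : ℤ, ∀ s, (∃ β : (Fin n → ℤ) → ℤ,
      (∀ z ∈ R, b z ≤ β z ∧ β z ≤ M z) ∧ (¬ ∃ y' ∈ Lf, Sat R β y') ∧ s = ∑ z ∈ R, β z) →
      s ≤ ∑ z ∈ R, M z := by
    refine ⟨∑ z ∈ R, M z, ?_⟩
    rintro s ⟨β, hβ1, _, rfl⟩
    exact Finset.sum_le_sum (fun z hz => (hβ1 z hz).2)
  obtain ⟨bnd, hbnd⟩ := hbdd
  have hinh : ∃ s : ℤ, (∃ β : (Fin n → ℤ) → ℤ,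
      (∀ z ∈ R, b z ≤ β z ∧ β z ≤ M z) ∧ (¬ ∃ y' ∈ Lf, Sat R β y') ∧ s = ∑ z ∈ R, β z) := by
    refine ⟨∑ z ∈ R, b z, b, fun z hz => ⟨le_refl _, ?_⟩, hRinf, rfl⟩
    have h1 := hb2 z
    have h2 := hMle z z (hRsub hz)
    omega
  obtain ⟨smax, ⟨β, hβbd, hβinf, hβsum⟩, hsmax⟩ := Int.exists_greatest_of_bdd
    ⟨∑ z ∈ R, M z, fun s hs => hbnd s hs⟩ hinh
  -- for each constraint in R there is a witness achieving equality β z + 1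
  have hviol : ∀ z ∈ R, ∀ w ∈ Lf, Sat (R.erase z) β w → β z + 1 ≤ idot (a z) w := by
    intro z hz w hwL hsat
    by_contra hlt
    apply hβinf
    refine ⟨w, hwL, ?_⟩
    intro l hl
    by_cases hlz : l = z
    · subst hlz; omega
    · exact hsat l (Finset.mem_erase.mpr ⟨hlz, hl⟩)
  have hstep : ∀ z ∈ R, ∃ w ∈ Lf, Sat (R.erase z) β w ∧ idot (a z) w = β z + 1 := by
    intro z hz
    obtain ⟨w0, hw0L, hw0⟩ := hRwit z hz
    have hw0' : Sat (R.erase z) β w0 := by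
      intro l hl
      exact le_trans (hw0 l hl) (hβbd l (Finset.mem_of_mem_erase hl)).1
    by_contra hne
    push_neg at hne
    have hstrict : ∀ w ∈ Lf, Sat (R.erase z) β w → β z + 2 ≤ idot (a z) w := by
      intro w hwL hsat
      have h1 := hviol z hz w hwL hsat
      have h2 := hne w hwL hsat
      omega
    have hβM : β z < M z := by
      have h1 := hviol z hz w0 hw0L hw0'
      have h2 := hMle z w0 hw0L
      omega
    -- improve β at z, contradicting maximality
    set β' : (Fin n → ℤ) → ℤ := Function.update β z (β z + 1) with hβ'
    have hβ'erase : ∀ l ∈ R.erase z, β' l = β l := by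
      intro l hl
      exact Function.update_of_ne (Finset.mem_erase.mp hl).1 _ _
    have hβ'z : β' z = β z + 1 := Function.update_self _ _ _
    have hsum' : ∑ l ∈ R, β' l = smax + 1 := by
      rw [← Finset.add_sum_erase R β' hz, Finset.sum_congr rfl hβ'erase, hβ'z,
        hβsum, ← Finset.add_sum_erase R β hz]
      ring
    have hle := hbnd (smax + 1) ⟨β', ?_, ?_, hsum'.symm⟩
    · have hle2 := hsmax (smax + 1) ⟨β', ?_, ?_, hsum'.symm⟩
      · omega
      · intro l hl
        by_cases hlz : l = z
        · subst hlz
          refine ⟨?_, ?_⟩ <;> rw [hβ'z]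
          · have := (hβbd l hl).1; omega
          · omega
        · rw [hβ' , Function.update_of_ne hlz]
          exact hβbd l hl
      · rintro ⟨w, hwL, hsat⟩
        have hsat' : Sat (R.erase z) β w := by
          intro l hl
          rw [← hβ'erase l hl]
          exact hsat l (Finset.mem_of_mem_erase hl)
        have h1 := hstrict w hwL hsat'
        have h2 := hsat z hz
        rw [hβ'z] at h2
        omega
    · intro l hl
      by_cases hlz : l = z
      · subst hlz
        refine ⟨?_, ?_⟩ <;> rw [hβ'z]
        · have := (hβbd l hl).1; omega
        · omega
      · rw [hβ', Function.update_of_ne hlz]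
        exact hβbd l hl
    · rintro ⟨w, hwL, hsat⟩
      have hsat' : Sat (R.erase z) β w := by
        intro l hl
        rw [← hβ'erase l hl]
        exact hsat l (Finset.mem_of_mem_erase hl)
      have h1 := hstrict w hwL hsat'
      have h2 := hsat z hz
      rw [hβ'z] at h2
      omega
  choose! w hwL hwSat hwEq using hstep
  -- R cannot be large...
  by_cases hRc : R.card ≤ 2 ^ n
  · -- ... because otherwise take a witness for a 2^n-set covering the images of iota
    have hG0 : (R.image iota).card ≤ 2 ^ n := le_trans Finset.card_image_le hRc
    obtain ⟨G, hGsub, hGcard⟩ := Finset.exists_superset_card_eq hG0 hcard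
    apply hRinf
    refine ⟨y G, hYL G, ?_⟩
    intro z hz
    apply hb1 z
    rw [Finset.mem_filter]
    exact ⟨hYL G, hy G hGcard (iota z) (hGsub (Finset.mem_image_of_mem iota hz))⟩
  · -- ... and otherwise two witnesses agree mod 2 and their midpoint satisfies everything
    push_neg at hRc
    have hcard2 : (Finset.univ : Finset (Fin n → ZMod 2)).card < R.card := by
      rw [Finset.card_univ]
      have : Fintype.card (Fin n → ZMod 2) = 2 ^ n := by
        rw [Fintype.card_fun]
        simp
      omega
    obtain ⟨p, hp, q, hq, hpq, heq⟩ := Finset.exists_ne_map_eq_of_card_lt_of_maps_to hcard2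
      (fun z _ => Finset.mem_univ ((fun j => ((w z j : ℤ) : ZMod 2)) : Fin n → ZMod 2))
    have hdvd : ∀ j, (2 : ℤ) ∣ (w p j + w q j) := by
      intro j
      have hj : ((w p j : ℤ) : ZMod 2) = ((w q j : ℤ) : ZMod 2) := congrFun heq j
      have : ((w p j + w q j : ℤ) : ZMod 2) = 0 := by
        push_cast
        rw [hj]
        ring_nf
        rw [show ((2 : ZMod 2)) = 0 from rfl]
        ring
      exact (ZMod.intCast_zmod_eq_zero_iff_dvd _ 2).mp this
    set mid : Fin n → ℤ := fun j => (w p j + w q j) / 2 with hmiddef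
    have hm2 : ∀ j, w p j + w q j = 2 * mid j := fun j => (Int.mul_ediv_cancel' (hdvd j)).symm
    have hmL : mid ∈ Lf := hmid (w p) (w q) mid (hwL p hp) (hwL q hq) hm2
    have hdot : ∀ zc : Fin n → ℤ, idot zc (w p) + idot zc (w q) = 2 * idot zc mid := by
      intro zc
      simp only [idot, ← Finset.sum_add_distrib, Finset.mul_sum]
      refine Finset.sum_congr rfl (fun j _ => ?_)
      rw [← mul_add, hm2 j]
      ring
    apply hβinf
    refine ⟨mid, hmL, ?_⟩
    intro z hz
    have hkey := hdot (a z)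
    by_cases hzp : z = p
    · subst hzp
      have h1 : idot (a z) (w z) = β z + 1 := hwEq z hz
      have h2 : idot (a z) (w q) ≤ β z :=
        hwSat q hq z (Finset.mem_erase.mpr ⟨hpq, hz⟩)
      omega
    · by_cases hzq : z = q
      · subst hzq
        have h1 : idot (a z) (w z) = β z + 1 := hwEq z hz
        have h2 : idot (a z) (w p) ≤ β z :=
          hwSat p hp z (Finset.mem_erase.mpr ⟨fun h => hpq h.symm, hz⟩)
        omega
      · have h1 : idot (a z) (w p) ≤ β z :=
          hwSat p hp z (Finset.mem_erase.mpr ⟨hzp, hz⟩)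
        have h2 : idot (a z) (w q) ≤ β z :=
          hwSat q hq z (Finset.mem_erase.mpr ⟨hzq, hz⟩)
        omega


/-- Helly number of a cut-and-project set with convex window is at most `2^(d+k)`. -/
theorem cut_and_project_helly (d k : ℕ) (hd : 1 ≤ d) (hk : 1 ≤ k)
    (b : Module.Basis (Fin (d + k)) ℝ ((Fin d → ℝ) × (Fin k → ℝ)))
    (Λ : Set ((Fin d → ℝ) × (Fin k → ℝ)))
    (hΛ : Λ = {x | ∃ c : Fin (d + k) → ℤ, x = ∑ i, (c i : ℝ) • b i})
    (hinj : Set.InjOn Prod.fst Λ)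
    (W : Set (Fin k → ℝ)) (hWcpt : IsCompact W) (hWconv : Convex ℝ W)
    (hWreg : closure (interior W) = W)
    (V : Set (Fin d → ℝ)) (hV : V = {p | ∃ x ∈ Λ, x.2 ∈ W ∧ x.1 = p})
    (ι : Type) [Fintype ι] (F : ι → Set (Fin d → ℝ))
    (hFconv : ∀ i, Convex ℝ (F i))
    (hFcard : 2 ^ (d + k) ≤ Fintype.card ι)
    (hF : ∀ G : Finset ι, G.card = 2 ^ (d + k) → ∃ p ∈ V, ∀ i ∈ G, p ∈ F i) :
    ∃ p ∈ V, ∀ i, p ∈ F i := by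
  classical
  set e := b.equivFun with he
  set A : ι → Set (Fin (d + k) → ℝ) := fun i => e '' ((F i) ×ˢ W) with hA
  have hAconv : ∀ i, Convex ℝ (A i) := by
    intro i
    have h := ((hFconv i).prod hWconv).linear_image (e : ((Fin d → ℝ) × (Fin k → ℝ)) →ₗ[ℝ]
      (Fin (d + k) → ℝ))
    simpa [hA] using h
  have hsymm : ∀ c : Fin (d + k) → ℤ, e.symm (icast c) = ∑ i, (c i : ℝ) • b i := by
    intro c
    rw [he, Module.Basis.equivFun_symm_apply]
    rfl
  have hΛc : ∀ c : Fin (d + k) → ℤ, e.symm (icast c) ∈ Λ := by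
    intro c
    rw [hΛ]
    exact ⟨c, hsymm c⟩
  have hH : ∀ G : Finset ι, G.card = 2 ^ (d + k) →
      ∃ c : Fin (d + k) → ℤ, ∀ i ∈ G, icast c ∈ A i := by
    intro G hG
    obtain ⟨p, hpV, hpF⟩ := hF G hG
    rw [hV] at hpV
    obtain ⟨x, hxΛ, hxW, hx1⟩ := hpV
    rw [hΛ] at hxΛ
    obtain ⟨c, hc⟩ := hxΛ
    have hxc : e.symm (icast c) = x := by rw [hsymm c, ← hc]
    refine ⟨c, fun i hi => ?_⟩
    refine ⟨x, ⟨hx1 ▸ hpF i hi, hxW⟩, ?_⟩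
    rw [← hxc, e.apply_symm_apply]
  obtain ⟨c, hc⟩ := doignon_s0 A hAconv hFcard hH
  have hι : Nonempty ι := by
    have h1 : 0 < 2 ^ (d + k) := pow_pos (by norm_num) _
    exact Fintype.card_pos_iff.mp (lt_of_lt_of_le h1 hFcard)
  obtain ⟨i0⟩ := hι
  have hx : ∀ i, e.symm (icast c) ∈ (F i) ×ˢ W := by
    intro i
    obtain ⟨u, hu, hue⟩ := hc i
    have : u = e.symm (icast c) := by rw [← hue, e.symm_apply_apply]
    exact this ▸ hu
  refine ⟨(e.symm (icast c)).1, ?_, fun i => ((hx i).1 : _)⟩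
  rw [hV]
  exact ⟨e.symm (icast c), hΛc c, (hx i0).2, rfl⟩

end
end

section
/- Let S be a d-dimensional k-crystal. Then for every finite family F of convex subsets of ℝ^d with at least k·2^d members, if every k·2^d members of F have a common point belonging to S, then all members of F have a common point belonging to S (i.e. the Helly number of S is at most k·2^d). -/
open Set

namespace CrystalHellyAux

/-- Exchange lemma: if `v` is not in the hull of `T`, and `A` is a subset of the hull of
`insert v T` whose hull contains `v`, then `v ∈ A`. -/
lemma exchange {d : ℕ} {v : Fin d → ℝ} {T A : Set (Fin d → ℝ)}
    (hT : T.Finite) (hTne : T.Nonempty)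
    (hvT : v ∉ convexHull ℝ T)
    (hA : A ⊆ convexHull ℝ (insert v T))
    (hvA : v ∈ convexHull ℝ A) : v ∈ A := by
  obtain ⟨f, u, hfu, huv⟩ := geometric_hahn_banach_closed_point
    (convex_convexHull ℝ T) (hT.isCompact_convexHull ℝ).isClosed hvT
  by_contra hvA'
  have hex : ∃ a ∈ A, f v ≤ f a := by
    by_contra hno
    push_neg at hno
    have hsub : A ⊆ {y | f y < f v} := fun a ha => hno a ha
    have hv' : v ∈ {y | f y < f v} :=
      convexHull_min hsub (convex_halfSpace_lt ⟨f.map_add, f.map_smul⟩ _) hvA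
    simp only [mem_setOf_eq] at hv'
    exact lt_irrefl _ hv'
  obtain ⟨a, haA, hfa⟩ := hex
  have haT : a ∈ convexHull ℝ (insert v T) := hA haA
  rw [convexHull_insert hTne, mem_convexJoin] at haT
  obtain ⟨p, hp, z, hz, hseg⟩ := haT
  rw [mem_singleton_iff] at hp
  rw [hp] at hseg
  obtain ⟨α, β, hα, hβ, hαβ, hsum⟩ := hseg
  have hfz : f z < u := hfu z hz
  rcases eq_or_lt_of_le hβ with hβ0 | hβpos
  · have hav : a = v := by
      rw [← hsum, ← hβ0, zero_smul, add_zero, show α = 1 by linarith, one_smul]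
    exact hvA' (hav ▸ haA)
  · have hfa' : f a < f v := by
      have hc := congrArg f hsum
      rw [map_add, map_smul, map_smul, smul_eq_mul, smul_eq_mul] at hc
      have h1 : β * f z < β * f v := mul_lt_mul_of_pos_left (by linarith) hβpos
      have h2 : α * f v + β * f v = f v := by linear_combination f v * hαβ
      linarith
    linarith

/-- The crystal `S` meets every compact set in a finite set. -/
lemma lattice_inter_finite {d k : ℕ} (b : Module.Basis (Fin d) ℝ (Fin d → ℝ))
    (Λ : Set (Fin d → ℝ))
    (hΛ : Λ = {x | ∃ c : Fin d → ℤ, x = ∑ i, (c i : ℝ) • b i})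
    (t : Fin k → (Fin d → ℝ)) (S : Set (Fin d → ℝ))
    (hS : S = {x | ∃ i : Fin k, ∃ l ∈ Λ, x = l + t i})
    {K : Set (Fin d → ℝ)} (hK : IsCompact K) : (S ∩ K).Finite := by
  have hMrs : ∀ p : Fin k × Fin d, ∃ M : ℝ, ∀ x ∈ K, |b.coord p.2 (x - t p.1)| ≤ M := by
    rintro ⟨r, s⟩
    have hcont : Continuous fun x : Fin d → ℝ => b.coord s (x - t r) :=
      (LinearMap.continuous_of_finiteDimensional (b.coord s)).comp
        (continuous_id.sub continuous_const)
    have hcomp : IsCompact ((fun x => b.coord s (x - t r)) '' K) := hK.image hcont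
    obtain ⟨M, hM⟩ := hcomp.isBounded.exists_norm_le
    exact ⟨M, fun x hx => by
      simpa [Real.norm_eq_abs] using hM _ (mem_image_of_mem _ hx)⟩
  choose M hM using hMrs
  set M0 : ℝ := ∑ p : Fin k × Fin d, max (M p) 0 with hM0
  have hMle : ∀ p : Fin k × Fin d, M p ≤ M0 := by
    intro p
    calc M p ≤ max (M p) 0 := le_max_left _ _
    _ ≤ M0 := Finset.single_le_sum (f := fun q => max (M q) 0)
        (fun q _ => le_max_right _ _) (Finset.mem_univ p)
  have hsub : S ∩ K ⊆ ⋃ r : Fin k,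
      (fun c : Fin d → ℤ => (∑ s, (c s : ℝ) • b s) + t r) ''
        (Set.pi Set.univ fun _ : Fin d => Set.Icc (-⌊M0⌋) ⌊M0⌋) := by
    rintro x ⟨hxS, hxK⟩
    rw [hS] at hxS
    obtain ⟨r, l, hl, rfl⟩ := hxS
    rw [hΛ] at hl
    obtain ⟨c, rfl⟩ := hl
    refine mem_iUnion.mpr ⟨r, ⟨c, ?_, rfl⟩⟩
    intro s _
    have hco : b.coord s (((∑ i, (c i : ℝ) • b i) + t r) - t r) = (c s : ℝ) := by
      rw [add_sub_cancel_right, Module.Basis.coord_apply, Module.Basis.repr_sum_self]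
    have hle : |(c s : ℝ)| ≤ M0 := by
      rw [← hco]
      exact (hM (r, s) _ hxK).trans (hMle (r, s))
    rw [← Int.cast_abs] at hle
    have habs : |c s| ≤ ⌊M0⌋ := Int.le_floor.mpr hle
    rw [abs_le] at habs
    exact ⟨habs.1, habs.2⟩
  refine Set.Finite.subset (Set.finite_iUnion fun r => Set.Finite.image _ ?_) hsub
  exact Set.Finite.pi fun _ => Set.finite_Icc _ _

end CrystalHellyAux
namespace CrystalHellyAux

open Set

lemma core {d k : ℕ} (hk : 1 ≤ k)
    (b : Module.Basis (Fin d) ℝ (Fin d → ℝ))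
    (Λ : Set (Fin d → ℝ))
    (hΛ : Λ = {x | ∃ c : Fin d → ℤ, x = ∑ i, (c i : ℝ) • b i})
    (t : Fin k → (Fin d → ℝ))
    (S : Set (Fin d → ℝ))
    (hS : S = {x | ∃ i : Fin k, ∃ l ∈ Λ, x = l + t i}) :
    ∀ (m : ℕ) (ι : Type) [Fintype ι] (F : ι → Set (Fin d → ℝ)) (x : ι → (Fin d → ℝ)),
      k * 2 ^ d + 1 ≤ Fintype.card ι →
      (∀ i, Convex ℝ (F i)) →
      (∀ i, x i ∈ S) →
      (∀ i j, i ≠ j → x i ∈ F j) →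
      (S ∩ convexHull ℝ (Set.range x)).Finite →
      (S ∩ convexHull ℝ (Set.range x)).ncard ≤ m →
      ∃ p ∈ S ∩ convexHull ℝ (Set.range x), ∀ i, p ∈ F i := by
  intro m
  induction m with
  | zero =>
    intro ι _ F x hcard hconv hxS hxF hfin hm
    exfalso
    have hpos : 0 < Fintype.card ι := by
      have h1 : 0 < 2 ^ d := Nat.pow_pos (by norm_num)
      nlinarith
    obtain ⟨i₀⟩ := Fintype.card_pos_iff.mp hpos
    have hmem : x i₀ ∈ S ∩ convexHull ℝ (Set.range x) :=
      ⟨hxS i₀, subset_convexHull ℝ _ ⟨i₀, rfl⟩⟩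
    have hempty : S ∩ convexHull ℝ (Set.range x) = ∅ :=
      (Set.ncard_eq_zero hfin).mp (Nat.le_zero.mp hm)
    rw [hempty] at hmem
    exact hmem
  | succ m ih =>
    intro ι _ F x hcard hconv hxS hxF hfin hm
    classical
    set P := convexHull ℝ (Set.range x) with hP
    have hxP : ∀ i, x i ∈ P := fun i => subset_convexHull ℝ _ ⟨i, rfl⟩
    -- degenerate case: two equal points
    by_cases hdup : ∃ a c, a ≠ c ∧ x a = x c
    · obtain ⟨a, c, hac, he⟩ := hdup
      refine ⟨x a, ⟨hxS a, hxP a⟩, fun l => ?_⟩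
      by_cases hla : l = a
      · subst hla
        rw [he]
        exact hxF c l (Ne.symm hac)
      · exact hxF a l fun h => hla h.symm
    push_neg at hdup
    -- degenerate case: some point in hull of the others
    by_cases hext : ∃ i₀, x i₀ ∈ convexHull ℝ (x '' {l | l ≠ i₀})
    · obtain ⟨i₀, hi₀⟩ := hext
      refine ⟨x i₀, ⟨hxS i₀, hxP i₀⟩, fun l => ?_⟩
      by_cases hl : l = i₀
      · subst hl
        refine convexHull_min ?_ (hconv l) hi₀
        rintro y ⟨a, ha, rfl⟩
        exact hxF a l ha
      · exact hxF i₀ l fun h => hl h.symm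
    push_neg at hext
    -- some useful general facts
    have hTne : ∀ i₀ : ι, (x '' {l | l ≠ i₀}).Nonempty := by
      intro i₀
      have hnt : Nontrivial ι := by
        rw [← Fintype.one_lt_card_iff_nontrivial]
        have h1 : 0 < 2 ^ d := Nat.pow_pos (by norm_num)
        nlinarith
      obtain ⟨l, hl⟩ := exists_ne i₀
      exact ⟨x l, l, hl, rfl⟩
    have hinsT : ∀ i₀ : ι, insert (x i₀) (x '' {l | l ≠ i₀}) = Set.range x := by
      intro i₀
      ext y
      simp only [Set.mem_insert_iff, Set.mem_image, Set.mem_setOf_eq, Set.mem_range]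
      constructor
      · rintro (rfl | ⟨l, _, rfl⟩)
        exacts [⟨i₀, rfl⟩, ⟨l, rfl⟩]
      · rintro ⟨l, rfl⟩
        by_cases hl : l = i₀
        · subst hl; exact Or.inl rfl
        · exact Or.inr ⟨l, hl, rfl⟩
    -- the replacement machine
    have hrepl : ∀ (i₀ : ι) (z : Fin d → ℝ), z ∈ S → z ∈ P → z ≠ x i₀ →
        (S ∩ convexHull ℝ (Set.range (Function.update x i₀ z))).Finite ∧
        (S ∩ convexHull ℝ (Set.range (Function.update x i₀ z))).ncard ≤ m ∧
        convexHull ℝ (Set.range (Function.update x i₀ z)) ⊆ P := by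
      intro i₀ z hzS hzP hzne
      have hrange : Set.range (Function.update x i₀ z) = insert z (x '' {l | l ≠ i₀}) := by
        ext y
        simp only [Set.mem_range, Set.mem_insert_iff, Set.mem_image, Set.mem_setOf_eq]
        constructor
        · rintro ⟨l, rfl⟩
          by_cases hl : l = i₀
          · subst hl; exact Or.inl (Function.update_self _ _ _)
          · exact Or.inr ⟨l, hl, (Function.update_of_ne hl _ _).symm⟩
        · rintro (rfl | ⟨l, hl, rfl⟩)
          · exact ⟨i₀, Function.update_self _ _ _⟩
          · exact ⟨l, Function.update_of_ne hl _ _⟩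
      have hrsub : Set.range (Function.update x i₀ z) ⊆ P := by
        rw [hrange]
        refine insert_subset hzP ?_
        rintro y ⟨l, _, rfl⟩
        exact hxP l
      have hsubP : convexHull ℝ (Set.range (Function.update x i₀ z)) ⊆ P :=
        convexHull_min hrsub (convex_convexHull ℝ _)
      have hnotin : x i₀ ∉ convexHull ℝ (Set.range (Function.update x i₀ z)) := by
        intro hmem
        have hxiA : x i₀ ∈ Set.range (Function.update x i₀ z) := by
          refine exchange (Set.toFinite _) (hTne i₀) (hext i₀) ?_ hmem
          rw [hinsT i₀, ← hP]
          exact hrsub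

        rw [hrange] at hxiA
        rcases hxiA with h | ⟨l, hl, hlx⟩
        · exact hzne h.symm
        · exact hdup l i₀ hl hlx
      have hsubset : S ∩ convexHull ℝ (Set.range (Function.update x i₀ z)) ⊆
          (S ∩ P) \ {x i₀} := by
        rintro y ⟨hyS, hyC⟩
        exact ⟨⟨hyS, hsubP hyC⟩, fun h => hnotin (mem_singleton_iff.mp h ▸ hyC)⟩
      have hfin' : (S ∩ convexHull ℝ (Set.range (Function.update x i₀ z))).Finite :=
        hfin.subset (hsubset.trans diff_subset)
      refine ⟨hfin', ?_, hsubP⟩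
      have h1 : (S ∩ convexHull ℝ (Set.range (Function.update x i₀ z))).ncard ≤
          ((S ∩ P) \ {x i₀}).ncard :=
        Set.ncard_le_ncard hsubset hfin.diff
      have h2 : ((S ∩ P) \ {x i₀}).ncard = (S ∩ P).ncard - 1 :=
        Set.ncard_diff_singleton_of_mem ⟨hxS i₀, hxP i₀⟩
      omega
    -- pigeonhole: two certificate points in the same class
    have hrep : ∀ i, ∃ (r : Fin k) (c : Fin d → ℤ),
        x i = (∑ s, (c s : ℝ) • b s) + t r := by
      intro i
      have hx := hxS i
      rw [hS] at hx
      obtain ⟨r, l, hl, hxe⟩ := hx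
      rw [hΛ] at hl
      obtain ⟨c, rfl⟩ := hl
      exact ⟨r, c, hxe⟩
    choose r c hrc using hrep
    have hcard2 : Fintype.card (Fin k × (Fin d → ZMod 2)) < Fintype.card ι := by
      rw [Fintype.card_prod, Fintype.card_fun, ZMod.card, Fintype.card_fin, Fintype.card_fin]
      omega
    obtain ⟨i, j, hij, hχ⟩ := Fintype.exists_ne_map_eq_of_card_lt
      (fun i => (r i, fun s => ((c i s : ℤ) : ZMod 2))) hcard2
    have hrr : r i = r j := (Prod.ext_iff.mp hχ).1
    have hcc : ∀ s, ((c i s : ℤ) : ZMod 2) = ((c j s : ℤ) : ZMod 2) :=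
      fun s => congrFun (Prod.ext_iff.mp hχ).2 s
    have heven : ∀ s, ∃ e : ℤ, c i s + c j s = 2 * e := by
      intro s
      have hzm := hcc s
      rw [ZMod.intCast_eq_intCast_iff] at hzm
      obtain ⟨u, hu⟩ := Int.ModEq.dvd hzm
      exact ⟨c i s + u, by omega⟩
    choose e he using heven
    set w : Fin d → ℝ := midpoint ℝ (x i) (x j) with hw
    have hxij : x i ≠ x j := hdup i j hij
    have half : ∀ v : Fin d → ℝ, (⅟(2:ℝ)) • (v + v) = v := fun v => by
      rw [← two_smul ℝ v, smul_smul, invOf_mul_self, one_smul]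
    have hsum2 : (∑ s, ((c i s : ℝ)) • b s) + (∑ s, ((c j s : ℝ)) • b s) =
        (∑ s, (e s : ℝ) • b s) + (∑ s, (e s : ℝ) • b s) := by
      rw [← Finset.sum_add_distrib, ← Finset.sum_add_distrib]
      refine Finset.sum_congr rfl fun s _ => ?_
      rw [← add_smul, ← add_smul]
      congr 1
      have hcast : ((c i s + c j s : ℤ) : ℝ) = ((2 * e s : ℤ) : ℝ) := by rw [he s]
      push_cast at hcast
      linarith
    have hwmid : w = (∑ s, (e s : ℝ) • b s) + t (r i) := by
      rw [hw, midpoint_eq_smul_add, hrc i, hrc j, hrr]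
      rw [show ((∑ s, ((c i s : ℝ)) • b s) + t (r j)) + ((∑ s, ((c j s : ℝ)) • b s) + t (r j)) =
        ((∑ s, ((c i s : ℝ)) • b s) + (∑ s, ((c j s : ℝ)) • b s)) + (t (r j) + t (r j)) from by abel]
      rw [hsum2, smul_add, half, half]
    have hwS : w ∈ S := by
      rw [hS]
      exact ⟨r i, ∑ s, (e s : ℝ) • b s, by rw [hΛ]; exact ⟨e, rfl⟩, hwmid⟩
    have hwseg : w ∈ segment ℝ (x i) (x j) := midpoint_mem_segment _ _
    have hwP : w ∈ P := (convex_convexHull ℝ _).segment_subset (hxP i) (hxP j) hwseg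
    have hwxi : w ≠ x i := fun h => hxij ((midpoint_eq_left_iff (R := ℝ)).mp h)
    have hwxj : w ≠ x j := fun h => hxij ((midpoint_eq_right_iff (R := ℝ)).mp h)
    have hwF : ∀ l, l ≠ i → l ≠ j → w ∈ F l := fun l hli hlj =>
      (hconv l).segment_subset (hxF i l (Ne.symm hli)) (hxF j l (Ne.symm hlj)) hwseg
    by_cases hwFi : w ∈ F i
    · by_cases hwFj : w ∈ F j
      · -- w is a common point
        refine ⟨w, ⟨hwS, hwP⟩, fun l => ?_⟩
        by_cases hli : l = i
        · exact hli ▸ hwFi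
        by_cases hlj : l = j
        · exact hlj ▸ hwFj
        · exact hwF l hli hlj
      · -- replace x j by w
        obtain ⟨hf, hn, hsubP⟩ := hrepl j w hwS hwP hwxj
        have hxS' : ∀ a, Function.update x j w a ∈ S := by
          intro a
          by_cases h : a = j
          · subst h; rw [Function.update_self]; exact hwS
          · rw [Function.update_of_ne h]; exact hxS a
        have hxF' : ∀ a b', a ≠ b' → Function.update x j w a ∈ F b' := by
          intro a b' hab
          by_cases haj : a = j
          · subst haj
            rw [Function.update_self]
            by_cases hbi : b' = i
            · exact hbi ▸ hwFi
            · exact hwF b' hbi (Ne.symm hab)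
          · rw [Function.update_of_ne haj]; exact hxF a b' hab
        obtain ⟨p, ⟨hpS, hpC⟩, hpF⟩ := ih ι F (Function.update x j w) hcard hconv hxS' hxF' hf hn
        exact ⟨p, ⟨hpS, hsubP hpC⟩, hpF⟩
    · by_cases hwFj : w ∈ F j
      · -- replace x i by w
        obtain ⟨hf, hn, hsubP⟩ := hrepl i w hwS hwP hwxi
        have hxS' : ∀ a, Function.update x i w a ∈ S := by
          intro a
          by_cases h : a = i
          · subst h; rw [Function.update_self]; exact hwS
          · rw [Function.update_of_ne h]; exact hxS a
        have hxF' : ∀ a b', a ≠ b' → Function.update x i w a ∈ F b' := by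
          intro a b' hab
          by_cases hai : a = i
          · subst hai
            rw [Function.update_self]
            by_cases hbj : b' = j
            · exact hbj ▸ hwFj
            · exact hwF b' (Ne.symm hab) hbj
          · rw [Function.update_of_ne hai]; exact hxF a b' hab
        obtain ⟨p, ⟨hpS, hpC⟩, hpF⟩ := ih ι F (Function.update x i w) hcard hconv hxS' hxF' hf hn
        exact ⟨p, ⟨hpS, hsubP hpC⟩, hpF⟩
      · -- hard case: w is in neither F i nor F j; enlarge F j and replace x i by w
        obtain ⟨hf, hn, hsubP'⟩ := hrepl i w hwS hwP hwxi
        set F' := Function.update F j (convexHull ℝ (insert w (F j))) with hF'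
        have hconv' : ∀ l, Convex ℝ (F' l) := by
          intro l
          by_cases h : l = j
          · subst h; rw [hF', Function.update_self]; exact convex_convexHull ℝ _
          · rw [hF', Function.update_of_ne h]; exact hconv l
        have hxS' : ∀ a, Function.update x i w a ∈ S := by
          intro a
          by_cases h : a = i
          · subst h; rw [Function.update_self]; exact hwS
          · rw [Function.update_of_ne h]; exact hxS a
        have hxF' : ∀ a b', a ≠ b' → Function.update x i w a ∈ F' b' := by
          intro a b' hab
          by_cases hai : a = i
          · subst hai
            rw [Function.update_self]
            by_cases hbj : b' = j
            · subst hbj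
              rw [hF', Function.update_self]
              exact subset_convexHull ℝ _ (mem_insert _ _)
            · rw [hF', Function.update_of_ne hbj]
              exact hwF b' (Ne.symm hab) hbj
          · rw [Function.update_of_ne hai]
            by_cases hbj : b' = j
            · subst hbj
              rw [hF', Function.update_self]
              exact subset_convexHull ℝ _ (mem_insert_of_mem _ (hxF a _ hab))
            · rw [hF', Function.update_of_ne hbj]
              exact hxF a b' hab
        obtain ⟨s, ⟨hsS, hsC⟩, hsF'⟩ := ih ι F' (Function.update x i w) hcard hconv' hxS' hxF' hf hn
        have hsP : s ∈ P := hsubP' hsC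
        have hsFl : ∀ l, l ≠ j → s ∈ F l := by
          intro l hl
          have := hsF' l
          rwa [hF', Function.update_of_ne hl] at this
        by_cases hsFj : s ∈ F j
        · refine ⟨s, ⟨hsS, hsP⟩, fun l => ?_⟩
          by_cases h : l = j
          · exact h ▸ hsFj
          · exact hsFl l h
        · have hsmem : s ∈ convexHull ℝ (insert w (F j)) := by
            have := hsF' j
            rwa [hF', Function.update_self] at this
          have hFjne : (F j).Nonempty := ⟨x i, hxF i j hij⟩
          rw [convexHull_insert hFjne, mem_convexJoin] at hsmem
          obtain ⟨w', hw', f, hfFj, hseg⟩ := hsmem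
          rw [mem_singleton_iff] at hw'
          rw [hw'] at hseg
          rw [(hconv j).convexHull_eq] at hfFj
          by_cases hsxj : s = x j
          · -- collinearity: then x j ∈ F j and we are done
            have hbtw1 : Wbtw ℝ (x i) w (x j) := mem_segment_iff_wbtw.mp hwseg
            have hbtw2 : Wbtw ℝ w (x j) f := mem_segment_iff_wbtw.mp (hsxj ▸ hseg)
            have hray1 : SameRay ℝ (x j - x i) (x j - w) := by
              have hv : x j - x i = (2 : ℝ) • (x j - w) := by
                have h2w : w + w = x i + x j := by
                  rw [hw]; exact midpoint_add_self ℝ (x i) (x j)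
                rw [two_smul]
                calc x j - x i = (x j + x j) - (x i + x j) := by abel
                _ = (x j + x j) - (w + w) := by rw [h2w]
                _ = (x j - w) + (x j - w) := by abel
              rw [hv]
              exact SameRay.sameRay_nonneg_smul_left _ (by norm_num)
            have hray2 : SameRay ℝ (x j - w) (f - x j) := by
              have := hbtw2
              rw [wbtw_iff_sameRay_vsub] at this
              simpa [vsub_eq_sub] using this
            have hbtw3 : Wbtw ℝ (x i) (x j) f := by
              rw [wbtw_iff_sameRay_vsub]
              simp only [vsub_eq_sub]
              exact hray1.trans hray2 fun h =>
                absurd h (sub_ne_zero_of_ne (Ne.symm hwxj))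
            have hxjF : x j ∈ F j :=
              (hconv j).segment_subset (hxF i j hij) hfFj hbtw3.mem_segment
            refine ⟨x j, ⟨hxS j, hxP j⟩, fun l => ?_⟩
            by_cases h : l = j
            · exact h ▸ hxjF
            · exact hxF j l fun hh => h hh.symm
          · -- replace x j by s
            obtain ⟨hf2, hn2, hsubP2⟩ := hrepl j s hsS hsP hsxj
            have hxS2 : ∀ a, Function.update x j s a ∈ S := by
              intro a
              by_cases h : a = j
              · subst h; rw [Function.update_self]; exact hsS
              · rw [Function.update_of_ne h]; exact hxS a
            have hxF2 : ∀ a b', a ≠ b' → Function.update x j s a ∈ F b' := by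
              intro a b' hab
              by_cases haj : a = j
              · subst haj
                rw [Function.update_self]
                exact hsFl b' (Ne.symm hab)
              · rw [Function.update_of_ne haj]; exact hxF a b' hab
            obtain ⟨p, ⟨hpS, hpC⟩, hpF⟩ := ih ι F (Function.update x j s) hcard hconv hxS2 hxF2 hf2 hn2
            exact ⟨p, ⟨hpS, hsubP2 hpC⟩, hpF⟩

end CrystalHellyAux
namespace CrystalHellyAux

open Set

lemma main {d k : ℕ} (hk : 1 ≤ k)
    (b : Module.Basis (Fin d) ℝ (Fin d → ℝ))
    (Λ : Set (Fin d → ℝ))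
    (hΛ : Λ = {x | ∃ c : Fin d → ℤ, x = ∑ i, (c i : ℝ) • b i})
    (t : Fin k → (Fin d → ℝ))
    (S : Set (Fin d → ℝ))
    (hS : S = {x | ∃ i : Fin k, ∃ l ∈ Λ, x = l + t i}) :
    ∀ (n : ℕ) (ι : Type) [Fintype ι] (F : ι → Set (Fin d → ℝ)),
      Fintype.card ι = n → k * 2 ^ d ≤ n →
      (∀ i, Convex ℝ (F i)) →
      (∀ G : Finset ι, G.card = k * 2 ^ d → ∃ p ∈ S, ∀ i ∈ G, p ∈ F i) →
      ∃ p ∈ S, ∀ i, p ∈ F i := by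
  intro n
  induction n using Nat.strong_induction_on with
  | _ n ih =>
    intro ι _ F hcardn hN hconv hF
    by_cases hbase : n = k * 2 ^ d
    · obtain ⟨p, hpS, hpF⟩ := hF Finset.univ (by rw [Finset.card_univ, hcardn, hbase])
      exact ⟨p, hpS, fun i => hpF i (Finset.mem_univ i)⟩
    · have hn : k * 2 ^ d + 1 ≤ n := by omega
      classical
      have hcert : ∀ i₀ : ι, ∃ p, p ∈ S ∧ ∀ j, j ≠ i₀ → p ∈ F j := by
        intro i₀
        have hcard' : Fintype.card {j : ι // j ≠ i₀} = n - 1 := by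
          have h1 : Fintype.card {j : ι // ¬ (j = i₀)} =
              Fintype.card ι - Fintype.card {j : ι // j = i₀} :=
            Fintype.card_subtype_compl _
          have h2 : Fintype.card {j : ι // j = i₀} = 1 := Fintype.card_subtype_eq i₀
          simp only [ne_eq]
          omega
        obtain ⟨p, hpS, hpF⟩ := ih (n - 1) (by omega) {j : ι // j ≠ i₀}
          (fun j => F j.1) hcard' (by omega) (fun j => hconv j.1)
          (fun G hG => by
            obtain ⟨p, hpS, hpF⟩ := hF (G.map (Function.Embedding.subtype _))
              (by rw [Finset.card_map]; exact hG)
            exact ⟨p, hpS, fun j hj => hpF j.1 (Finset.mem_map_of_mem _ hj)⟩)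
        exact ⟨p, hpS, fun j hj => hpF ⟨j, hj⟩⟩
      choose xx hxxS hxxF using hcert
      have hfin : (S ∩ convexHull ℝ (Set.range xx)).Finite :=
        lattice_inter_finite b Λ hΛ t S hS ((Set.finite_range xx).isCompact_convexHull ℝ)
      obtain ⟨p, ⟨hpS, _⟩, hpF⟩ := core hk b Λ hΛ t S hS
        (S ∩ convexHull ℝ (Set.range xx)).ncard ι F xx
        (by omega) hconv hxxS (fun i j hij => hxxF i j (Ne.symm hij)) hfin le_rfl
      exact ⟨p, hpS, hpF⟩

end CrystalHellyAux

/-- Helly number of a `d`-dimensional `k`-crystal is at most `k * 2^d`. -/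
theorem crystal_helly (d k : ℕ) (hd : 1 ≤ d) (hk : 1 ≤ k)
    (b : Module.Basis (Fin d) ℝ (Fin d → ℝ))
    (Λ : Set (Fin d → ℝ))
    (hΛ : Λ = {x | ∃ c : Fin d → ℤ, x = ∑ i, (c i : ℝ) • b i})
    (t : Fin k → (Fin d → ℝ))
    (ht : ∀ i j, i ≠ j → t i - t j ∉ Λ)
    (S : Set (Fin d → ℝ))
    (hS : S = {x | ∃ i : Fin k, ∃ l ∈ Λ, x = l + t i})
    (ι : Type) [Fintype ι] (F : ι → Set (Fin d → ℝ))
    (hFconv : ∀ i, Convex ℝ (F i))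
    (hFcard : k * 2 ^ d ≤ Fintype.card ι)
    (hF : ∀ G : Finset ι, G.card = k * 2 ^ d → ∃ p ∈ S, ∀ i ∈ G, p ∈ F i) :
    ∃ p ∈ S, ∀ i, p ∈ F i :=
  CrystalHellyAux.main hk b Λ hΛ t S hS (Fintype.card ι) ι F rfl hFcard hFconv hF
end

section
/- Let S₁, S₂ ⊆ ℝ^d, and let n₁, n₂ be positive integers such that Sᵢ has Helly number at most nᵢ for i = 1, 2. Then S₁ ∪ S₂ has Helly number at most n₁ + n₂; that is, for every finite family F of convex subsets of ℝ^d with at least n₁ + n₂ members, if every n₁ + n₂ members of F have a common point belonging to S₁ ∪ S₂, then all members of F have a common point belonging to S₁ ∪ S₂. -/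
/-- `S` has Helly number at most `n`: every finite family of at least `n` convex sets,
any `n` of which meet in a point of `S`, has a common point in `S`. -/
def HellyNumberLE (d : ℕ) (S : Set (Fin d → ℝ)) (n : ℕ) : Prop :=
  ∀ (ι : Type) [Fintype ι], ∀ F : ι → Set (Fin d → ℝ),
    (∀ i, Convex ℝ (F i)) → n ≤ Fintype.card ι →
    (∀ G : Finset ι, G.card = n → ∃ p ∈ S, ∀ i ∈ G, p ∈ F i) →
    ∃ p ∈ S, ∀ i, p ∈ F i

/-- The Helly number of a union of two sets is at most the sum of their Helly numbers. -/
theorem helly_number_union (d : ℕ) (S₁ S₂ : Set (Fin d → ℝ)) (n₁ n₂ : ℕ)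
    (hn₁ : 0 < n₁) (hn₂ : 0 < n₂)
    (h₁ : HellyNumberLE d S₁ n₁) (h₂ : HellyNumberLE d S₂ n₂) :
    HellyNumberLE d (S₁ ∪ S₂) (n₁ + n₂) := by
  intro ι _ F hconv hcard hH
  classical
  by_cases hA : ∀ G : Finset ι, G.card = n₁ → ∃ p ∈ S₁, ∀ i ∈ G, p ∈ F i
  · obtain ⟨p, hp, h⟩ := h₁ ι F hconv (le_trans (Nat.le_add_right _ _) hcard) hA
    exact ⟨p, Or.inl hp, h⟩
  · push_neg at hA
    obtain ⟨G₁, hG₁card, hG₁⟩ := hA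
    have key : ∀ G : Finset ι, G.card = n₂ → ∃ p ∈ S₂, ∀ i ∈ G, p ∈ F i := by
      intro G₂ hG₂card
      have hle : (G₁ ∪ G₂).card ≤ n₁ + n₂ :=
        le_trans (Finset.card_union_le _ _) (by omega)
      obtain ⟨H, hsub, hHcard⟩ := Finset.exists_superset_card_eq hle hcard
      obtain ⟨p, hpS, hp⟩ := hH H hHcard
      have hp1 : ∀ i ∈ G₁, p ∈ F i :=
        fun i hi => hp i (hsub (Finset.mem_union_left _ hi))
      have hp2 : ∀ i ∈ G₂, p ∈ F i :=
        fun i hi => hp i (hsub (Finset.mem_union_right _ hi))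
      rcases hpS with h | h
      · obtain ⟨i, hi, hni⟩ := hG₁ p h
        exact absurd (hp1 i hi) hni
      · exact ⟨p, h, hp2⟩
    obtain ⟨p, hp, h⟩ := h₂ ι F hconv (le_trans (Nat.le_add_left _ _) hcard) key
    exact ⟨p, Or.inr hp, h⟩
end

section
/- Let A, B, C, D be four points of ℝ² in convex position (each one is a vertex of the convex hull of {A, B, C, D}). Then either ABCD is a parallelogram, or there exist three distinct points P, Q, R among {A, B, C, D} such that the point M = P + R − Q lies in the convex hull of {A, B, C, D} and P, Q, R, M are the vertices of a parallelogram (i.e. PQRM is a nondegenerate parallelogram contained in the quadrilateral). -/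
lemma helper_mem {s : Set (ℝ × ℝ)} {M X Y Z : ℝ × ℝ} (hX : X ∈ s) (hY : Y ∈ s) (hZ : Z ∈ s)
    {c1 c2 c3 t : ℝ} (h1 : 0 ≤ c1) (h2 : 0 ≤ c2) (h3 : 0 ≤ c3) (ht : 0 < t)
    (hsum : c1 + c2 + c3 = t) (heq : t • M = c1 • X + c2 • Y + c3 • Z) :
    M ∈ convexHull ℝ s := by
  have hM : M = (c1/t) • X + (c2/t) • Y + (c3/t) • Z := by
    have h := congrArg (fun v : ℝ × ℝ => t⁻¹ • v) heq
    simp only [smul_smul, inv_mul_cancel₀ ht.ne', one_smul, smul_add] at h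
    rw [h, div_eq_inv_mul, div_eq_inv_mul, div_eq_inv_mul, mul_smul, mul_smul, mul_smul]
  rw [hM]
  have key := (convex_convexHull ℝ s).sum_mem (t := (Finset.univ : Finset (Fin 3)))
    (w := ![c1/t, c2/t, c3/t]) (z := ![X, Y, Z])
    (by
      intro i _
      fin_cases i
      · simpa using div_nonneg h1 ht.le
      · simpa using div_nonneg h2 ht.le
      · simpa using div_nonneg h3 ht.le)
    (by
      rw [Fin.sum_univ_three]
      simp only [Matrix.cons_val_zero, Matrix.cons_val_one, Matrix.head_cons]
      show c1/t + c2/t + _ = 1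
      have h2 : (![c1/t, c2/t, c3/t] : Fin 3 → ℝ) 2 = c3/t := rfl
      rw [h2]
      field_simp
      linarith)
    (by
      intro i _
      fin_cases i
      · simpa using subset_convexHull ℝ s hX
      · simpa using subset_convexHull ℝ s hY
      · simpa using subset_convexHull ℝ s hZ)
  rw [Fin.sum_univ_three] at key
  simpa using key

lemma ncol_congr {X Y Z X' Y' Z' : ℝ × ℝ} (h : ¬ Collinear ℝ ({X, Y, Z} : Set (ℝ × ℝ)))
    (hset : ({X', Y', Z'} : Set (ℝ × ℝ)) = {X, Y, Z}) :
    ¬ Collinear ℝ ({X', Y', Z'} : Set (ℝ × ℝ)) := by rw [hset]; exact h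

lemma ne12 {X Y Z : ℝ × ℝ} (h : ¬ Collinear ℝ ({X, Y, Z} : Set (ℝ × ℝ))) : X ≠ Y := by
  rintro rfl
  exact h (by rw [Set.insert_idem]; exact collinear_pair ℝ X Z)

lemma ne23 {X Y Z : ℝ × ℝ} (h : ¬ Collinear ℝ ({X, Y, Z} : Set (ℝ × ℝ))) : Y ≠ Z := by
  rintro rfl
  exact h (by rw [Set.pair_eq_singleton]; exact collinear_pair ℝ X Y)

lemma ne13 {X Y Z : ℝ × ℝ} (h : ¬ Collinear ℝ ({X, Y, Z} : Set (ℝ × ℝ))) : X ≠ Z := by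
  rintro rfl
  refine h ?_
  have hs : ({X, Y, X} : Set (ℝ × ℝ)) = {X, Y} := by ext x; simp; try tauto
  rw [hs]; exact collinear_pair ℝ X Y

lemma key {s : Set (ℝ × ℝ)} {P Q R S : ℝ × ℝ}
    (hP : P ∈ s) (hQ : Q ∈ s) (hR : R ∈ s) (hS : S ∈ s)
    (hPQR : ¬ Collinear ℝ ({P, Q, R} : Set (ℝ × ℝ)))
    (hQRS : ¬ Collinear ℝ ({Q, R, S} : Set (ℝ × ℝ)))
    (hQPS : ¬ Collinear ℝ ({Q, P, S} : Set (ℝ × ℝ)))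
    (hPSR : ¬ Collinear ℝ ({P, S, R} : Set (ℝ × ℝ)))
    {c1 c2 d1 d2 : ℝ} (hc1 : 0 < c1) (hc2 : 0 < c2) (hd1 : 0 < d1) (hd2 : 0 < d2)
    (hsum : c1 + c2 = d1 + d2) (hrel : c1 • P + c2 • R = d1 • Q + d2 • S) :
    ∃ X Y Z : ℝ × ℝ, X ∈ s ∧ Y ∈ s ∧ Z ∈ s ∧ X ≠ Y ∧ Y ≠ Z ∧ X ≠ Z ∧
      X + Z - Y ∈ convexHull ℝ s ∧ ¬ Collinear ℝ ({X, Y, Z} : Set (ℝ × ℝ)) := by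
  rcases le_total c1 d1 with h1 | h1 <;> rcases le_total c2 d1 with h2 | h2
  · -- c1 ≤ d1, c2 ≤ d1 : use M = P + R - Q
    exact ⟨P, Q, R, hP, hQ, hR, ne12 hPQR, ne23 hPQR, ne13 hPQR,
      helper_mem (c1 := d1 - c1) (c2 := d1 - c2) (c3 := d2) (t := d1) hP hR hS
        (by linarith) (by linarith) hd2.le hd1 (by linarith)
        (by linear_combination (norm := module) hrel), hPQR⟩
  · -- c1 ≤ d1, d1 ≤ c2 : use M = Q + S - R
    exact ⟨Q, R, S, hQ, hR, hS, ne12 hQRS, ne23 hQRS, ne13 hQRS,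
      helper_mem (c1 := c1) (c2 := c2 - d1) (c3 := c2 - d2) (t := c2) hP hQ hS
        hc1.le (by linarith) (by linarith) hc2 (by linarith)
        (by linear_combination (norm := module) -hrel), hQRS⟩
  · -- d1 ≤ c1, c2 ≤ d1 : use M = Q + S - P
    exact ⟨Q, P, S, hQ, hP, hS, ne12 hQPS, ne23 hQPS, ne13 hQPS,
      helper_mem (c1 := c1 - d1) (c2 := c1 - d2) (c3 := c2) (t := c1) hQ hS hR
        (by linarith) (by linarith) hc2.le hc1 (by linarith)
        (by linear_combination (norm := module) -hrel), hQPS⟩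
  · -- d1 ≤ c1, d1 ≤ c2 : use M = P + R - S
    exact ⟨P, S, R, hP, hS, hR, ne12 hPSR, ne23 hPSR, ne13 hPSR,
      helper_mem (c1 := d2 - c1) (c2 := d2 - c2) (c3 := d1) (t := d2) hP hR hQ
        (by linarith) (by linarith) hd1.le hd2 (by linarith)
        (by linear_combination (norm := module) hrel), hPSR⟩

lemma onePos {X Y Z W : ℝ × ℝ} (hX : X ∉ convexHull ℝ ({Y, Z, W} : Set (ℝ × ℝ)))
    {a b c d : ℝ} (ha : 0 < a) (hb : b ≤ 0) (hc : c ≤ 0) (hd : d ≤ 0)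
    (hs : a + b + c + d = 0) (he : a • X + b • Y + c • Z + d • W = 0) : False :=
  hX (helper_mem (M := X) (X := Y) (Y := Z) (Z := W) (c1 := -b) (c2 := -c) (c3 := -d) (t := a)
    (by simp) (by simp) (by simp)
    (by linarith) (by linarith) (by linarith) ha (by linarith)
    (by linear_combination (norm := module) he))

lemma wbtw_hull {X Y Z : ℝ × ℝ} {s : Set (ℝ × ℝ)} (h : Wbtw ℝ X Y Z)
    (hX : X ∈ s) (hZ : Z ∈ s) : Y ∈ convexHull ℝ s := by
  have h1 : Y ∈ segment ℝ X Z := h.mem_segment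
  rw [← convexHull_pair] at h1
  exact convexHull_mono (by simp [Set.insert_subset_iff, hX, hZ]) h1

lemma ncol_of_hyps {X Y Z W : ℝ × ℝ}
    (hX : X ∉ convexHull ℝ ({Y, Z, W} : Set (ℝ × ℝ)))
    (hY : Y ∉ convexHull ℝ ({X, Z, W} : Set (ℝ × ℝ)))
    (hZ : Z ∉ convexHull ℝ ({X, Y, W} : Set (ℝ × ℝ))) :
    ¬ Collinear ℝ ({X, Y, Z} : Set (ℝ × ℝ)) := by
  intro h
  rcases h.wbtw_or_wbtw_or_wbtw with hw | hw | hw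
  · exact hY (wbtw_hull hw (by simp) (by simp))
  · exact hZ (wbtw_hull hw (by simp) (by simp))
  · exact hX (wbtw_hull hw (by simp) (by simp))

lemma nonmem_congr {X : ℝ × ℝ} {s t : Set (ℝ × ℝ)} (h : X ∉ convexHull ℝ s) (hst : t = s) :
    X ∉ convexHull ℝ t := by rw [hst]; exact h

set_option maxHeartbeats 4000000 in
/-- Every convex quadrilateral is a parallelogram or contains a parallelogram three of whose
vertices are vertices of the quadrilateral. -/
theorem quadrilateral_contains_parallelogram (A B C D : ℝ × ℝ)
    (hA : A ∉ convexHull ℝ ({B, C, D} : Set (ℝ × ℝ)))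
    (hB : B ∉ convexHull ℝ ({A, C, D} : Set (ℝ × ℝ)))
    (hC : C ∉ convexHull ℝ ({A, B, D} : Set (ℝ × ℝ)))
    (hD : D ∉ convexHull ℝ ({A, B, C} : Set (ℝ × ℝ))) :
    (A + C = B + D ∨ A + B = C + D ∨ A + D = B + C) ∨
    ∃ P Q R : ℝ × ℝ, P ∈ ({A, B, C, D} : Set (ℝ × ℝ)) ∧
      Q ∈ ({A, B, C, D} : Set (ℝ × ℝ)) ∧ R ∈ ({A, B, C, D} : Set (ℝ × ℝ)) ∧
      P ≠ Q ∧ Q ≠ R ∧ P ≠ R ∧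
      P + R - Q ∈ convexHull ℝ ({A, B, C, D} : Set (ℝ × ℝ)) ∧
      ¬ Collinear ℝ ({P, Q, R} : Set (ℝ × ℝ)) := by
  classical
  have hAB : A ≠ B := by rintro rfl; exact hA (subset_convexHull ℝ _ (by simp))
  have hAC : A ≠ C := by rintro rfl; exact hA (subset_convexHull ℝ _ (by simp))
  have hAD : A ≠ D := by rintro rfl; exact hA (subset_convexHull ℝ _ (by simp))
  have hBC : B ≠ C := by rintro rfl; exact hB (subset_convexHull ℝ _ (by simp))
  have hBD : B ≠ D := by rintro rfl; exact hB (subset_convexHull ℝ _ (by simp))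
  have hCD : C ≠ D := by rintro rfl; exact hC (subset_convexHull ℝ _ (by simp))
  -- the four noncollinearity facts
  have nABC : ¬ Collinear ℝ ({A, B, C} : Set (ℝ × ℝ)) := ncol_of_hyps hA hB hC
  have nABD : ¬ Collinear ℝ ({A, B, D} : Set (ℝ × ℝ)) :=
    ncol_of_hyps (nonmem_congr hA (by ext x; simp; try tauto))
      (nonmem_congr hB (by ext x; simp; try tauto)) hD
  have nACD : ¬ Collinear ℝ ({A, C, D} : Set (ℝ × ℝ)) :=
    ncol_of_hyps (nonmem_congr hA (by ext x; simp; try tauto))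
      (nonmem_congr hC (by ext x; simp; try tauto))
      (nonmem_congr hD (by ext x; simp; try tauto))
  have nBCD : ¬ Collinear ℝ ({B, C, D} : Set (ℝ × ℝ)) :=
    ncol_of_hyps (nonmem_congr hB (by ext x; simp; try tauto))
      (nonmem_congr hC (by ext x; simp; try tauto))
      (nonmem_congr hD (by ext x; simp; try tauto))
  -- an affine dependence
  have hcard : ({A, B, C, D} : Finset (ℝ × ℝ)).card = 4 := by
    rw [Finset.card_insert_of_notMem (by simp [hAB, hAC, hAD]),
      Finset.card_insert_of_notMem (by simp [hBC, hBD]),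
      Finset.card_insert_of_notMem (by simp [hCD]), Finset.card_singleton]
  have hfr : Module.finrank ℝ (ℝ × ℝ) + 1 < ({A, B, C, D} : Finset (ℝ × ℝ)).card := by
    rw [hcard]
    have : Module.finrank ℝ (ℝ × ℝ) = 2 := by
      simp [Module.finrank_prod]
    omega
  obtain ⟨f, hf0, hfs, x, hxt, hxne⟩ :=
    Module.exists_nontrivial_relation_sum_zero_of_finrank_succ_lt_card hfr
  rw [Finset.sum_insert (by simp [hAB, hAC, hAD]), Finset.sum_insert (by simp [hBC, hBD]),
    Finset.sum_insert (by simp [hCD]), Finset.sum_singleton] at hf0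
  rw [Finset.sum_insert (by simp [hAB, hAC, hAD]), Finset.sum_insert (by simp [hBC, hBD]),
    Finset.sum_insert (by simp [hCD]), Finset.sum_singleton] at hfs
  obtain ⟨w1, w2, w3, w4, he, hs, hnz⟩ :
      ∃ w1 w2 w3 w4 : ℝ, w1 • A + w2 • B + w3 • C + w4 • D = 0 ∧
        w1 + w2 + w3 + w4 = 0 ∧ (w1 ≠ 0 ∨ w2 ≠ 0 ∨ w3 ≠ 0 ∨ w4 ≠ 0) := by
    refine ⟨f A, f B, f C, f D, by rw [← add_assoc, ← add_assoc] at hf0; exact hf0,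
      by linarith [hfs], ?_⟩
    simp only [Finset.mem_insert, Finset.mem_singleton] at hxt
    rcases hxt with rfl | rfl | rfl | rfl
    · exact Or.inl hxne
    · exact Or.inr (Or.inl hxne)
    · exact Or.inr (Or.inr (Or.inl hxne))
    · exact Or.inr (Or.inr (Or.inr hxne))
  clear hf0 hfs hxne hxt hcard hfr
  right
  rcases le_or_gt w1 0 with s1 | s1 <;> rcases le_or_gt w2 0 with s2 | s2 <;>
    rcases le_or_gt w3 0 with s3 | s3 <;> rcases le_or_gt w4 0 with s4 | s4
  -- 1: LLLL
  · rcases hnz with h | h | h | h <;> exact absurd (by linarith) h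
  -- 2: LLLG  pos {4}
  · exact (onePos hD s4 s1 s2 s3 (by linarith)
      (by linear_combination (norm := module) he)).elim
  -- 3: LLGL  pos {3}
  · exact (onePos hC s3 s1 s2 s4 (by linarith)
      (by linear_combination (norm := module) he)).elim
  -- 4: LLGG  pos {3,4}
  · rcases s1.lt_or_eq with s1' | s1'
    · rcases s2.lt_or_eq with s2' | s2'
      · exact key (P := C) (Q := A) (R := D) (S := B) (c1 := w3) (c2 := w4) (d1 := -w1) (d2 := -w2)
          (by simp) (by simp) (by simp) (by simp)
          (ncol_congr nACD (by ext x; simp; try tauto)) (ncol_congr nABD (by ext x; simp; try tauto))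
          (ncol_congr nABC (by ext x; simp; try tauto)) (ncol_congr nBCD (by ext x; simp; try tauto))
          s3 s4 (by linarith) (by linarith) (by linarith)
          (by linear_combination (norm := module) he)
      · exact (onePos hA (a := -w1) (b := -w2) (c := -w3) (d := -w4) (by linarith) (by linarith)
          (by linarith) (by linarith) (by linarith)
          (by linear_combination (norm := module) -he)).elim
    · exact (onePos hB (a := -w2) (b := -w1) (c := -w3) (d := -w4) (by linarith) (by linarith)
        (by linarith) (by linarith) (by linarith)
        (by linear_combination (norm := module) -he)).elim
  -- 5: LGLL  pos {2}
  · exact (onePos hB s2 s1 s3 s4 (by linarith)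
      (by linear_combination (norm := module) he)).elim
  -- 6: LGLG  pos {2,4}
  · rcases s1.lt_or_eq with s1' | s1'
    · rcases s3.lt_or_eq with s3' | s3'
      · exact key (P := B) (Q := A) (R := D) (S := C) (c1 := w2) (c2 := w4) (d1 := -w1) (d2 := -w3)
          (by simp) (by simp) (by simp) (by simp)
          (ncol_congr nABD (by ext x; simp; try tauto)) (ncol_congr nACD (by ext x; simp; try tauto))
          (ncol_congr nABC (by ext x; simp; try tauto)) (ncol_congr nBCD (by ext x; simp; try tauto))
          s2 s4 (by linarith) (by linarith) (by linarith)
          (by linear_combination (norm := module) he)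
      · exact (onePos hA (a := -w1) (b := -w2) (c := -w3) (d := -w4) (by linarith) (by linarith)
          (by linarith) (by linarith) (by linarith)
          (by linear_combination (norm := module) -he)).elim
    · exact (onePos hC (a := -w3) (b := -w1) (c := -w2) (d := -w4) (by linarith) (by linarith)
        (by linarith) (by linarith) (by linarith)
        (by linear_combination (norm := module) -he)).elim
  -- 7: LGGL  pos {2,3}
  · rcases s1.lt_or_eq with s1' | s1'
    · rcases s4.lt_or_eq with s4' | s4'
      · exact key (P := B) (Q := A) (R := C) (S := D) (c1 := w2) (c2 := w3) (d1 := -w1) (d2 := -w4)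
          (by simp) (by simp) (by simp) (by simp)
          (ncol_congr nABC (by ext x; simp; try tauto)) (ncol_congr nACD (by ext x; simp; try tauto))
          (ncol_congr nABD (by ext x; simp; try tauto)) (ncol_congr nBCD (by ext x; simp; try tauto))
          s2 s3 (by linarith) (by linarith) (by linarith)
          (by linear_combination (norm := module) he)
      · exact (onePos hA (a := -w1) (b := -w2) (c := -w3) (d := -w4) (by linarith) (by linarith)
          (by linarith) (by linarith) (by linarith)
          (by linear_combination (norm := module) -he)).elim
    · exact (onePos hD (a := -w4) (b := -w1) (c := -w2) (d := -w3) (by linarith) (by linarith)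
        (by linarith) (by linarith) (by linarith)
        (by linear_combination (norm := module) -he)).elim
  -- 8: LGGG  three pos, w1 ≤ 0
  · exact (onePos hA (a := -w1) (b := -w2) (c := -w3) (d := -w4) (by linarith) (by linarith)
      (by linarith) (by linarith) (by linarith)
      (by linear_combination (norm := module) -he)).elim
  -- 9: GLLL  pos {1}
  · exact (onePos hA s1 s2 s3 s4 (by linarith) he).elim
  -- 10: GLLG  pos {1,4}
  · rcases s2.lt_or_eq with s2' | s2'
    · rcases s3.lt_or_eq with s3' | s3'
      · exact key (P := A) (Q := B) (R := D) (S := C) (c1 := w1) (c2 := w4) (d1 := -w2) (d2 := -w3)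
          (by simp) (by simp) (by simp) (by simp)
          (ncol_congr nABD (by ext x; simp; try tauto)) (ncol_congr nBCD (by ext x; simp; try tauto))
          (ncol_congr nABC (by ext x; simp; try tauto)) (ncol_congr nACD (by ext x; simp; try tauto))
          s1 s4 (by linarith) (by linarith) (by linarith)
          (by linear_combination (norm := module) he)
      · exact (onePos hB (a := -w2) (b := -w1) (c := -w3) (d := -w4) (by linarith) (by linarith)
          (by linarith) (by linarith) (by linarith)
          (by linear_combination (norm := module) -he)).elim
    · exact (onePos hC (a := -w3) (b := -w1) (c := -w2) (d := -w4) (by linarith) (by linarith)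
        (by linarith) (by linarith) (by linarith)
        (by linear_combination (norm := module) -he)).elim
  -- 11: GLGL  pos {1,3}
  · rcases s2.lt_or_eq with s2' | s2'
    · rcases s4.lt_or_eq with s4' | s4'
      · exact key (P := A) (Q := B) (R := C) (S := D) (c1 := w1) (c2 := w3) (d1 := -w2) (d2 := -w4)
          (by simp) (by simp) (by simp) (by simp)
          (ncol_congr nABC (by ext x; simp; try tauto)) (ncol_congr nBCD (by ext x; simp; try tauto))
          (ncol_congr nABD (by ext x; simp; try tauto)) (ncol_congr nACD (by ext x; simp; try tauto))
          s1 s3 (by linarith) (by linarith) (by linarith)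
          (by linear_combination (norm := module) he)
      · exact (onePos hB (a := -w2) (b := -w1) (c := -w3) (d := -w4) (by linarith) (by linarith)
          (by linarith) (by linarith) (by linarith)
          (by linear_combination (norm := module) -he)).elim
    · exact (onePos hD (a := -w4) (b := -w1) (c := -w2) (d := -w3) (by linarith) (by linarith)
        (by linarith) (by linarith) (by linarith)
        (by linear_combination (norm := module) -he)).elim
  -- 12: GLGG  three pos, w2 ≤ 0
  · exact (onePos hB (a := -w2) (b := -w1) (c := -w3) (d := -w4) (by linarith) (by linarith)
      (by linarith) (by linarith) (by linarith)
      (by linear_combination (norm := module) -he)).elim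
  -- 13: GGLL  pos {1,2}
  · rcases s3.lt_or_eq with s3' | s3'
    · rcases s4.lt_or_eq with s4' | s4'
      · exact key (P := A) (Q := C) (R := B) (S := D) (c1 := w1) (c2 := w2) (d1 := -w3) (d2 := -w4)
          (by simp) (by simp) (by simp) (by simp)
          (ncol_congr nABC (by ext x; simp; try tauto)) (ncol_congr nBCD (by ext x; simp; try tauto))
          (ncol_congr nACD (by ext x; simp; try tauto)) (ncol_congr nABD (by ext x; simp; try tauto))
          s1 s2 (by linarith) (by linarith) (by linarith)
          (by linear_combination (norm := module) he)
      · exact (onePos hC (a := -w3) (b := -w1) (c := -w2) (d := -w4) (by linarith) (by linarith)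
          (by linarith) (by linarith) (by linarith)
          (by linear_combination (norm := module) -he)).elim
    · exact (onePos hD (a := -w4) (b := -w1) (c := -w2) (d := -w3) (by linarith) (by linarith)
        (by linarith) (by linarith) (by linarith)
        (by linear_combination (norm := module) -he)).elim
  -- 14: GGLG  three pos, w3 ≤ 0
  · exact (onePos hC (a := -w3) (b := -w1) (c := -w2) (d := -w4) (by linarith) (by linarith)
      (by linarith) (by linarith) (by linarith)
      (by linear_combination (norm := module) -he)).elim
  -- 15: GGGL  three pos, w4 ≤ 0
  · exact (onePos hD (a := -w4) (b := -w1) (c := -w2) (d := -w3) (by linarith) (by linarith)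
      (by linarith) (by linarith) (by linarith)
      (by linear_combination (norm := module) -he)).elim
  -- 16: GGGG
  · exfalso; linarith
end

section
/- Let X, X', Y, Y', Z, Z' be points of ℝ² such that X' − X = Y' − Y = Z' − Z = v for some nonzero vector v (i.e. the segments XX', YY', ZZ' are equal and parallel). Then at least one of the six points X, Y, Z, X', Y', Z' lies in the convex hull of the remaining five points. -/
lemma mem_hull4 {S : Set (ℝ × ℝ)} {A B C D : ℝ × ℝ}
    (hA : A ∈ S) (hB : B ∈ S) (hC : C ∈ S) (hD : D ∈ S)
    {a b c d : ℝ} (ha : 0 ≤ a) (hb : 0 ≤ b) (hc : 0 ≤ c) (hd : 0 ≤ d)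
    (hsum : a + b + c + d = 1) :
    a • A + b • B + c • C + d • D ∈ convexHull ℝ S := by
  have := (convex_convexHull ℝ S).sum_mem (t := (Finset.univ : Finset (Fin 4)))
    (w := ![a, b, c, d]) (z := ![A, B, C, D])
    (by intro i _; fin_cases i <;> simpa)
    (by simp [Fin.sum_univ_four]; linarith)
    (by intro i _; fin_cases i <;> simp <;>
        first
        | exact subset_convexHull ℝ S hA
        | exact subset_convexHull ℝ S hB
        | exact subset_convexHull ℝ S hC
        | exact subset_convexHull ℝ S hD)
  simpa [Fin.sum_univ_four] using this

lemma span_of_cross (v w : ℝ × ℝ) (hv : v ≠ 0) (h : w.1 * v.2 - w.2 * v.1 = 0) :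
    ∃ s : ℝ, w = s • v := by
  by_cases h1 : v.1 = 0
  · have h2 : v.2 ≠ 0 := by
      intro h2; exact hv (Prod.ext h1 h2)
    refine ⟨w.2 / v.2, ?_⟩
    have hw1 : w.1 = 0 := by
      have : w.1 * v.2 = 0 := by rw [h1] at h; linarith
      exact (mul_eq_zero.1 this).resolve_right h2
    apply Prod.ext <;> simp [hw1, h1]
    field_simp
  · refine ⟨w.1 / v.1, ?_⟩
    apply Prod.ext <;> simp
    · field_simp
    · field_simp; linarith

lemma aux_mid (X Z Y v : ℝ × ℝ) (hv : v ≠ 0) (t : ℝ) (ht0 : 0 ≤ t) (ht1 : t ≤ 1)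
    (hmid : Y.1 * v.2 - Y.2 * v.1
      = t * (X.1 * v.2 - X.2 * v.1) + (1 - t) * (Z.1 * v.2 - Z.2 * v.1)) :
    Y ∈ convexHull ℝ ({X, Z, X + v, Z + v, Y + v} : Set (ℝ × ℝ)) ∨
    Y + v ∈ convexHull ℝ ({X, Z, X + v, Z + v, Y} : Set (ℝ × ℝ)) := by
  obtain ⟨s, hs⟩ := span_of_cross v (Y - (t • X + (1 - t) • Z)) hv
    (by simp; linear_combination hmid)
  have hYeq : Y = t • X + (1 - t) • Z + s • v := by
    rw [← hs]; abel
  have ht1' : 0 ≤ 1 - t := by linarith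
  rcases le_total 0 s with hs0 | hs0
  · rcases le_total s 1 with hs1 | hs1
    · left
      have key : Y = ((1-s)*t) • X + ((1-s)*(1-t)) • Z + (s*t) • (X+v) + (s*(1-t)) • (Z+v) := by
        rw [hYeq]; module
      rw [key]
      exact mem_hull4 (by simp) (by simp) (by simp) (by simp)
        (mul_nonneg (by linarith) ht0) (mul_nonneg (by linarith) ht1')
        (mul_nonneg hs0 ht0) (mul_nonneg hs0 ht1') (by ring)
    · left
      have hsne : s ≠ 0 := by intro h; rw [h] at hs1; linarith
      have key : Y = (t/s) • (X+v) + ((1-t)/s) • (Z+v) + (1-1/s) • (Y+v) + (0:ℝ) • X := by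
        rw [hYeq]
        match_scalars <;> field_simp <;> ring
      nth_rewrite 2 [key]
      refine mem_hull4 ?_ ?_ ?_ ?_ ?_ ?_ ?_ le_rfl ?_
      · simp
      · simp
      · simp
      · simp
      · exact div_nonneg ht0 (by linarith)
      · exact div_nonneg ht1' (by linarith)
      · have : 1/s ≤ 1 := by rw [div_le_one (by linarith)]; linarith
        linarith
      · field_simp
        ring
  · rcases le_total (-1) s with hs1 | hs1
    · right
      have key : Y + v = (-s*t) • X + (-s*(1-t)) • Z + ((s+1)*t) • (X+v) + ((s+1)*(1-t)) • (Z+v) := by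
        rw [hYeq]; module
      rw [key]
      exact mem_hull4 (by simp) (by simp) (by simp) (by simp)
        (mul_nonneg (by linarith) ht0) (mul_nonneg (by linarith) ht1')
        (mul_nonneg (by linarith) ht0) (mul_nonneg (by linarith) ht1') (by ring)
    · right
      have hsne : s ≠ 0 := by intro h; rw [h] at hs1; linarith
      have key : Y + v = (-t/s) • X + (-(1-t)/s) • Z + (1+1/s) • Y + (0:ℝ) • X := by
        rw [hYeq]
        match_scalars <;> field_simp <;> ring
      nth_rewrite 1 [key]
      refine mem_hull4 ?_ ?_ ?_ ?_ ?_ ?_ ?_ le_rfl ?_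
      · simp
      · simp
      · simp
      · simp
      · exact div_nonneg_iff.2 (Or.inr ⟨by linarith, hs0⟩)
      · exact div_nonneg_iff.2 (Or.inr ⟨by linarith, hs0⟩)
      · have : -1 ≤ 1/s := by
          rw [le_div_iff_of_neg (by linarith)]; linarith
        linarith
      · field_simp
        ring

lemma exists_combo_between (a c m : ℝ) (h1 : a ≤ m) (h2 : m ≤ c) :
    ∃ t : ℝ, 0 ≤ t ∧ t ≤ 1 ∧ m = t * a + (1 - t) * c := by
  rcases eq_or_lt_of_le (h1.trans h2) with h | h
  · exact ⟨1, zero_le_one, le_rfl, by rw [← h] at h2; linarith⟩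
  · refine ⟨(c - m) / (c - a), div_nonneg (by linarith) (by linarith), ?_, ?_⟩
    · rw [div_le_one (by linarith)]; linarith
    · have hne : c - a ≠ 0 := by linarith
      field_simp
      ring

/-- Given three equal and parallel segments `XX'`, `YY'`, `ZZ'` in the plane, one of the six
endpoints lies in the convex hull of the remaining five. -/
theorem three_parallel_segments (X X' Y Y' Z Z' v : ℝ × ℝ) (hv : v ≠ 0)
    (hX : X' - X = v) (hY : Y' - Y = v) (hZ : Z' - Z = v) :
    X ∈ convexHull ℝ ({Y, Z, X', Y', Z'} : Set (ℝ × ℝ)) ∨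
    Y ∈ convexHull ℝ ({X, Z, X', Y', Z'} : Set (ℝ × ℝ)) ∨
    Z ∈ convexHull ℝ ({X, Y, X', Y', Z'} : Set (ℝ × ℝ)) ∨
    X' ∈ convexHull ℝ ({X, Y, Z, Y', Z'} : Set (ℝ × ℝ)) ∨
    Y' ∈ convexHull ℝ ({X, Y, Z, X', Z'} : Set (ℝ × ℝ)) ∨
    Z' ∈ convexHull ℝ ({X, Y, Z, X', Y'} : Set (ℝ × ℝ)) := by
  have eX : X + v = X' := by rw [← hX]; abel
  have eY : Y + v = Y' := by rw [← hY]; abel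
  have eZ : Z + v = Z' := by rw [← hZ]; abel
  rcases le_total (X.1 * v.2 - X.2 * v.1) (Y.1 * v.2 - Y.2 * v.1) with h1 | h1 <;>
    rcases le_total (Y.1 * v.2 - Y.2 * v.1) (Z.1 * v.2 - Z.2 * v.1) with h2 | h2 <;>
    rcases le_total (X.1 * v.2 - X.2 * v.1) (Z.1 * v.2 - Z.2 * v.1) with h3 | h3
  -- 1: X ≤ Y ≤ Z : middle Y
  · obtain ⟨t, ht0, ht1, hm⟩ := exists_combo_between _ _ _ h1 h2
    obtain h | h := aux_mid X Z Y v hv t ht0 ht1 hm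
    · rw [eX, eZ, eY] at h
      exact Or.inr (Or.inl (convexHull_mono (by intro p hp; simp at hp ⊢; tauto) h))
    · rw [eX, eZ, eY] at h
      exact Or.inr (Or.inr (Or.inr (Or.inr (Or.inl
        (convexHull_mono (by intro p hp; simp at hp ⊢; tauto) h)))))
  -- 2: X ≤ Y ≤ Z, Z ≤ X (degenerate): middle Y again
  · obtain ⟨t, ht0, ht1, hm⟩ := exists_combo_between _ _ _ h1 h2
    obtain h | h := aux_mid X Z Y v hv t ht0 ht1 hm
    · rw [eX, eZ, eY] at h
      exact Or.inr (Or.inl (convexHull_mono (by intro p hp; simp at hp ⊢; tauto) h))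
    · rw [eX, eZ, eY] at h
      exact Or.inr (Or.inr (Or.inr (Or.inr (Or.inl
        (convexHull_mono (by intro p hp; simp at hp ⊢; tauto) h)))))
  -- 3: X ≤ Z ≤ Y : middle Z
  · obtain ⟨t, ht0, ht1, hm⟩ := exists_combo_between _ _ _ h3 h2
    obtain h | h := aux_mid X Y Z v hv t ht0 ht1 hm
    · rw [eX, eZ, eY] at h
      exact Or.inr (Or.inr (Or.inl (convexHull_mono (by intro p hp; simp at hp ⊢; tauto) h)))
    · rw [eX, eZ, eY] at h
      exact Or.inr (Or.inr (Or.inr (Or.inr (Or.inr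
        (convexHull_mono (by intro p hp; simp at hp ⊢; tauto) h)))))
  -- 4: Z ≤ X ≤ Y : middle X
  · obtain ⟨t, ht0, ht1, hm⟩ := exists_combo_between _ _ _ h3 h1
    obtain h | h := aux_mid Z Y X v hv t ht0 ht1 hm
    · rw [eX, eZ, eY] at h
      exact Or.inl (convexHull_mono (by intro p hp; simp at hp ⊢; tauto) h)
    · rw [eX, eZ, eY] at h
      exact Or.inr (Or.inr (Or.inr (Or.inl
        (convexHull_mono (by intro p hp; simp at hp ⊢; tauto) h))))
  -- 5: Y ≤ X ≤ Z : middle X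
  · obtain ⟨t, ht0, ht1, hm⟩ := exists_combo_between _ _ _ h1 h3
    obtain h | h := aux_mid Y Z X v hv t ht0 ht1 hm
    · rw [eX, eZ, eY] at h
      exact Or.inl (convexHull_mono (by intro p hp; simp at hp ⊢; tauto) h)
    · rw [eX, eZ, eY] at h
      exact Or.inr (Or.inr (Or.inr (Or.inl
        (convexHull_mono (by intro p hp; simp at hp ⊢; tauto) h))))
  -- 6: Y ≤ Z ≤ X : middle Z
  · obtain ⟨t, ht0, ht1, hm⟩ := exists_combo_between _ _ _ h2 h3
    obtain h | h := aux_mid Y X Z v hv t ht0 ht1 hm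
    · rw [eX, eZ, eY] at h
      exact Or.inr (Or.inr (Or.inl (convexHull_mono (by intro p hp; simp at hp ⊢; tauto) h)))
    · rw [eX, eZ, eY] at h
      exact Or.inr (Or.inr (Or.inr (Or.inr (Or.inr
        (convexHull_mono (by intro p hp; simp at hp ⊢; tauto) h)))))
  -- 7: Z ≤ Y ≤ X, X ≤ Z (degenerate) : middle Y
  · obtain ⟨t, ht0, ht1, hm⟩ := exists_combo_between _ _ _ h2 h1
    obtain h | h := aux_mid Z X Y v hv t ht0 ht1 hm
    · rw [eX, eZ, eY] at h
      exact Or.inr (Or.inl (convexHull_mono (by intro p hp; simp at hp ⊢; tauto) h))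
    · rw [eX, eZ, eY] at h
      exact Or.inr (Or.inr (Or.inr (Or.inr (Or.inl
        (convexHull_mono (by intro p hp; simp at hp ⊢; tauto) h)))))
  -- 8: Z ≤ Y ≤ X : middle Y
  · obtain ⟨t, ht0, ht1, hm⟩ := exists_combo_between _ _ _ h2 h1
    obtain h | h := aux_mid Z X Y v hv t ht0 ht1 hm
    · rw [eX, eZ, eY] at h
      exact Or.inr (Or.inl (convexHull_mono (by intro p hp; simp at hp ⊢; tauto) h))
    · rw [eX, eZ, eY] at h
      exact Or.inr (Or.inr (Or.inr (Or.inr (Or.inl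
        (convexHull_mono (by intro p hp; simp at hp ⊢; tauto) h)))))
end

section
/- There do not exist four vectors v₁, v₂, v₃, v₄ ∈ ℤ² such that every pair {vᵢ, vⱼ} with i ≠ j forms a basis of the lattice ℤ², i.e. such that |det(vᵢ, vⱼ)| = 1 for all 1 ≤ i < j ≤ 4. -/
set_option maxRecDepth 10000 in
lemma aux_zmod2 : ¬ ∃ g : Fin 4 → ZMod 2 × ZMod 2, ∀ i j, i ≠ j →
    (g i).1 * (g j).2 - (g i).2 * (g j).1 = 1 := by decide

/-- There are no four vectors in `ℤ²` every pair of which forms a basis of `ℤ²`. -/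
theorem no_four_pairwise_unimodular_vectors :
    ¬ ∃ v : Fin 4 → ℤ × ℤ, ∀ i j, i ≠ j →
      ((v i).1 * (v j).2 - (v i).2 * (v j).1 = 1 ∨
       (v i).1 * (v j).2 - (v i).2 * (v j).1 = -1) := by
  rintro ⟨v, hv⟩
  apply aux_zmod2
  refine ⟨fun i => (((v i).1 : ZMod 2), ((v i).2 : ZMod 2)), fun i j hij => ?_⟩
  rcases hv i j hij with h | h
  · have := congrArg (Int.cast : ℤ → ZMod 2) h
    push_cast at this
    simpa using this
  · have := congrArg (Int.cast : ℤ → ZMod 2) h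
    push_cast at this
    simp only [this]
    decide
end

section
/- Let A, B, C, D ∈ ℤ² be four points in convex position (each a vertex of the convex hull of {A,B,C,D}, listed in cyclic order) such that the convex hull of {A,B,C,D} contains no point of ℤ² other than A, B, C, D. Then ABCD is a parallelogram, and moreover it is a fundamental parallelogram of ℤ² (its area equals 1, i.e. the edge vectors at any vertex form a basis of ℤ²). -/
/-- The canonical embedding of the integer lattice `ℤ²` into the plane `ℝ²`. -/
def intPairToR2 (z : ℤ × ℤ) : ℝ × ℝ := ((z.1 : ℝ), (z.2 : ℝ))

lemma mem_hull3 {x y z : ℝ × ℝ} {a b c : ℝ} (ha : 0 ≤ a) (hb : 0 ≤ b) (hc : 0 ≤ c)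
    (habc : a + b + c = 1) : a • x + b • y + c • z ∈ convexHull ℝ ({x, y, z} : Set (ℝ × ℝ)) := by
  have hx : x ∈ convexHull ℝ ({x, y, z} : Set (ℝ × ℝ)) := subset_convexHull ℝ _ (by simp)
  have hy : y ∈ convexHull ℝ ({x, y, z} : Set (ℝ × ℝ)) := subset_convexHull ℝ _ (by simp)
  have hz : z ∈ convexHull ℝ ({x, y, z} : Set (ℝ × ℝ)) := subset_convexHull ℝ _ (by simp)
  rcases eq_or_lt_of_le (by linarith : (0:ℝ) ≤ b + c) with h0 | h0
  · have hb0 : b = 0 := by linarith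
    have hc0 : c = 0 := by linarith
    have ha1 : a = 1 := by linarith
    simpa [hb0, hc0, ha1] using hx
  · have hm : (b / (b + c)) • y + (c / (b + c)) • z ∈ convexHull ℝ ({x, y, z} : Set (ℝ × ℝ)) := by
      apply (convex_convexHull ℝ _) hy hz (by positivity) (by positivity)
      field_simp
    have := (convex_convexHull ℝ ({x, y, z} : Set (ℝ × ℝ))) hx hm ha (le_of_lt h0) (by linarith)
    convert this using 1
    rw [smul_add, smul_smul, smul_smul]
    rw [mul_div_cancel₀ _ (ne_of_gt h0), mul_div_cancel₀ _ (ne_of_gt h0)]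
    ring_nf

lemma between_of_det_zero (a b c : ℝ × ℝ)
    (hdet : (b.1 - a.1) * (c.2 - a.2) - (b.2 - a.2) * (c.1 - a.1) = 0) :
    a ∈ segment ℝ b c ∨ b ∈ segment ℝ a c ∨ c ∈ segment ℝ a b := by
  by_cases hab : a = b
  · exact Or.inr (Or.inl (hab ▸ left_mem_segment ℝ a c))
  by_cases hac : a = c
  · exact Or.inr (Or.inr (hac ▸ left_mem_segment ℝ a b))
  -- u = b - a, v = c - a ; u ≠ 0
  have hune : (b.1 - a.1) ≠ 0 ∨ (b.2 - a.2) ≠ 0 := by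
    by_contra h
    push_neg at h
    exact hab (Prod.ext (by linarith [h.1]) (by linarith [h.2]))
  -- find t with c - a = t • (b - a)
  obtain ⟨t, ht1, ht2⟩ : ∃ t : ℝ, c.1 - a.1 = t * (b.1 - a.1) ∧ c.2 - a.2 = t * (b.2 - a.2) := by
    rcases hune with h | h
    · exact ⟨(c.1 - a.1) / (b.1 - a.1), by field_simp, by field_simp; linarith [hdet]⟩
    · exact ⟨(c.2 - a.2) / (b.2 - a.2), by field_simp; linarith [hdet], by field_simp⟩
  rcases le_or_gt t 0 with ht | ht
  · -- a between b and c : a = λ b + (1-λ) c, λ = t/(t-1)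
    left
    have htm : t - 1 < 0 := by linarith
    refine ⟨t / (t - 1), 1 - t / (t - 1), ?_, ?_, by ring, ?_⟩
    · rw [le_div_iff_of_neg htm]; linarith
    · rw [sub_nonneg, div_le_one_of_neg htm]; linarith
    · have hne : t - 1 ≠ 0 := ne_of_lt htm
      apply Prod.ext <;> simp <;> field_simp <;> nlinarith [ht1, ht2]
  rcases le_or_gt t 1 with ht' | ht'
  · -- c between a and b
    right; right
    refine ⟨1 - t, t, by linarith, le_of_lt ht, by ring, ?_⟩
    apply Prod.ext <;> simp <;> nlinarith [ht1, ht2]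
  · -- b between a and c
    right; left
    refine ⟨1 - 1/t, 1/t, by rw [sub_nonneg]; rw [div_le_one (by linarith)]; linarith,
      by positivity, by ring, ?_⟩
    apply Prod.ext <;> simp <;> field_simp <;> nlinarith [ht1, ht2]

lemma indep_aux (u v : ℤ × ℤ) (hd : u.1 * v.2 - u.2 * v.1 ≠ 0) (r s : ℤ)
    (h1 : r * u.1 + s * v.1 = 0) (h2 : r * u.2 + s * v.2 = 0) : r = 0 ∧ s = 0 := by
  have hr : r * (u.1 * v.2 - u.2 * v.1) = 0 := by linear_combination v.2 * h1 - v.1 * h2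
  have hs : s * (u.1 * v.2 - u.2 * v.1) = 0 := by linear_combination u.1 * h2 - u.2 * h1
  exact ⟨by rcases mul_eq_zero.1 hr with h | h; exact h; exact absurd h hd,
         by rcases mul_eq_zero.1 hs with h | h; exact h; exact absurd h hd⟩

lemma det_one_of_empty_pos (u v : ℤ × ℤ) (hd : 0 < u.1 * v.2 - u.2 * v.1)
    (he : ∀ z : ℤ × ℤ, ∀ α β : ℝ, 0 ≤ α → 0 ≤ β → α + β ≤ 1 →
      (z.1 : ℝ) = α * u.1 + β * v.1 → (z.2 : ℝ) = α * u.2 + β * v.2 →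
      z = 0 ∨ z = u ∨ z = v) :
    u.1 * v.2 - u.2 * v.1 = 1 := by
  set d : ℤ := u.1 * v.2 - u.2 * v.1 with hdef
  have hdne : d ≠ 0 := ne_of_gt hd
  by_contra hne
  have hd2 : 2 ≤ d := by omega
  have hexz : ∃ z : ℤ × ℤ, ¬ ∃ m n : ℤ, z.1 = m * u.1 + n * v.1 ∧ z.2 = m * u.2 + n * v.2 := by
    by_contra h
    push_neg at h
    obtain ⟨m₁, n₁, h11, h12⟩ := h (1, 0)
    obtain ⟨m₂, n₂, h21, h22⟩ := h (0, 1)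
    simp only at h11 h12 h21 h22
    have key : (m₁ * n₂ - m₂ * n₁) * d = 1 := by
      rw [hdef]
      linear_combination (-(m₂ * u.2 + n₂ * v.2)) * h11 + (m₂ * u.1 + n₂ * v.1) * h12 - h22
    have hdvd : d ∣ 1 := ⟨m₁ * n₂ - m₂ * n₁, by rw [← key]; ring⟩
    have := Int.le_of_dvd one_pos hdvd
    omega
  obtain ⟨z, hz⟩ := hexz
  set a : ℤ := z.1 * v.2 - z.2 * v.1 with ha
  set b : ℤ := u.1 * z.2 - u.2 * z.1 with hb
  have cram1 : a * u.1 + b * v.1 = d * z.1 := by rw [ha, hb, hdef]; ring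
  have cram2 : a * u.2 + b * v.2 = d * z.2 := by rw [ha, hb, hdef]; ring
  set m : ℤ := a / d
  set r : ℤ := a % d with hr
  set n : ℤ := b / d
  set s : ℤ := b % d with hs
  have hda : d * m + r = a := Int.mul_ediv_add_emod a d
  have hdb : d * n + s = b := Int.mul_ediv_add_emod b d
  have hr0 : 0 ≤ r := Int.emod_nonneg a hdne
  have hs0 : 0 ≤ s := Int.emod_nonneg b hdne
  have hrd : r < d := Int.emod_lt_of_pos a hd
  have hsd : s < d := Int.emod_lt_of_pos b hd
  set p : ℤ × ℤ := (z.1 - m * u.1 - n * v.1, z.2 - m * u.2 - n * v.2) with hp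
  have hp1 : d * p.1 = r * u.1 + s * v.1 := by
    simp only [hp]; linear_combination cram1 - u.1 * hda - v.1 * hdb
  have hp2 : d * p.2 = r * u.2 + s * v.2 := by
    simp only [hp]; linear_combination cram2 - u.2 * hda - v.2 * hdb
  have hrs : ¬ (r = 0 ∧ s = 0) := by
    rintro ⟨hr', hs'⟩
    apply hz
    refine ⟨m, n, ?_, ?_⟩
    · have h0 : d * p.1 = 0 := by rw [hp1, hr', hs']; ring
      have : p.1 = 0 := (mul_eq_zero.1 h0).resolve_left hdne
      simp only [hp] at this; linarith
    · have h0 : d * p.2 = 0 := by rw [hp2, hr', hs']; ring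
      have : p.2 = 0 := (mul_eq_zero.1 h0).resolve_left hdne
      simp only [hp] at this; linarith
  have hdR : (0:ℝ) < (d:ℝ) := by exact_mod_cast hd
  rcases le_or_gt (r + s) d with hcase | hcase
  · have hc1 : ((p.1 : ℤ) : ℝ) = ((r:ℝ)/(d:ℝ)) * u.1 + ((s:ℝ)/(d:ℝ)) * v.1 := by
      rw [div_mul_eq_mul_div, div_mul_eq_mul_div, ← add_div, eq_div_iff (ne_of_gt hdR)]
      exact_mod_cast (by linarith [hp1] : p.1 * d = r * u.1 + s * v.1)
    have hc2 : ((p.2 : ℤ) : ℝ) = ((r:ℝ)/(d:ℝ)) * u.2 + ((s:ℝ)/(d:ℝ)) * v.2 := by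
      rw [div_mul_eq_mul_div, div_mul_eq_mul_div, ← add_div, eq_div_iff (ne_of_gt hdR)]
      exact_mod_cast (by linarith [hp2] : p.2 * d = r * u.2 + s * v.2)
    have hsum : (r:ℝ)/(d:ℝ) + (s:ℝ)/(d:ℝ) ≤ 1 := by
      rw [← add_div, div_le_one hdR]; exact_mod_cast hcase
    rcases he p _ _ (by positivity) (by positivity) hsum hc1 hc2 with h | h | h
    · rw [h] at hp1 hp2
      simp only [Prod.fst_zero, Prod.snd_zero, mul_zero] at hp1 hp2
      exact hrs (indep_aux u v hdne r s hp1.symm hp2.symm)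
    · rw [h] at hp1 hp2
      obtain ⟨h1, h2⟩ := indep_aux u v hdne (r - d) s (by linarith) (by linarith)
      omega
    · rw [h] at hp1 hp2
      obtain ⟨h1, h2⟩ := indep_aux u v hdne r (s - d) (by linarith) (by linarith)
      omega
  · set q : ℤ × ℤ := (u.1 + v.1 - p.1, u.2 + v.2 - p.2) with hq
    have hq1 : d * q.1 = (d - r) * u.1 + (d - s) * v.1 := by
      simp only [hq]; linear_combination - hp1
    have hq2 : d * q.2 = (d - r) * u.2 + (d - s) * v.2 := by
      simp only [hq]; linear_combination - hp2
    have hc1 : ((q.1 : ℤ) : ℝ) = (((d-r:ℤ):ℝ)/(d:ℝ)) * u.1 + (((d-s:ℤ):ℝ)/(d:ℝ)) * v.1 := by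
      rw [div_mul_eq_mul_div, div_mul_eq_mul_div, ← add_div, eq_div_iff (ne_of_gt hdR)]
      exact_mod_cast (by linarith [hq1] : q.1 * d = (d - r) * u.1 + (d - s) * v.1)
    have hc2 : ((q.2 : ℤ) : ℝ) = (((d-r:ℤ):ℝ)/(d:ℝ)) * u.2 + (((d-s:ℤ):ℝ)/(d:ℝ)) * v.2 := by
      rw [div_mul_eq_mul_div, div_mul_eq_mul_div, ← add_div, eq_div_iff (ne_of_gt hdR)]
      exact_mod_cast (by linarith [hq2] : q.2 * d = (d - r) * u.2 + (d - s) * v.2)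
    have hα0 : (0:ℝ) ≤ ((d-r:ℤ):ℝ)/(d:ℝ) := by
      apply div_nonneg _ (le_of_lt hdR); exact_mod_cast (by omega : (0:ℤ) ≤ d - r)
    have hβ0 : (0:ℝ) ≤ ((d-s:ℤ):ℝ)/(d:ℝ) := by
      apply div_nonneg _ (le_of_lt hdR); exact_mod_cast (by omega : (0:ℤ) ≤ d - s)
    have hsum : ((d-r:ℤ):ℝ)/(d:ℝ) + ((d-s:ℤ):ℝ)/(d:ℝ) ≤ 1 := by
      rw [← add_div, div_le_one hdR]
      exact_mod_cast (by omega : (d - r) + (d - s) ≤ d)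
    rcases he q _ _ hα0 hβ0 hsum hc1 hc2 with h | h | h
    · rw [h] at hq1 hq2
      simp only [Prod.fst_zero, Prod.snd_zero, mul_zero] at hq1 hq2
      obtain ⟨h1, h2⟩ := indep_aux u v hdne (d - r) (d - s) hq1.symm hq2.symm
      omega
    · rw [h] at hq1 hq2
      obtain ⟨h1, h2⟩ := indep_aux u v hdne (-r) (d - s) (by linarith) (by linarith)
      omega
    · rw [h] at hq1 hq2
      obtain ⟨h1, h2⟩ := indep_aux u v hdne (d - r) (-s) (by linarith) (by linarith)
      omega

lemma det_pm_one_of_empty (u v : ℤ × ℤ) (hd : u.1 * v.2 - u.2 * v.1 ≠ 0)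
    (he : ∀ z : ℤ × ℤ, ∀ α β : ℝ, 0 ≤ α → 0 ≤ β → α + β ≤ 1 →
      (z.1 : ℝ) = α * u.1 + β * v.1 → (z.2 : ℝ) = α * u.2 + β * v.2 →
      z = 0 ∨ z = u ∨ z = v) :
    u.1 * v.2 - u.2 * v.1 = 1 ∨ u.1 * v.2 - u.2 * v.1 = -1 := by
  rcases lt_or_gt_of_ne hd with h | h
  · right
    have hpos : 0 < v.1 * u.2 - v.2 * u.1 := by linarith
    have := det_one_of_empty_pos v u hpos (fun z α β hα hβ hsum h1 h2 => by
      rcases he z β α hβ hα (by linarith) (by linarith) (by linarith) with h | h | h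
      · exact Or.inl h
      · exact Or.inr (Or.inr h)
      · exact Or.inr (Or.inl h))
    linarith
  · exact Or.inl (det_one_of_empty_pos u v h he)

lemma sign_aux {a b X Y : ℝ} (ha : 0 ≤ a) (hb : 0 ≤ b) (hab : a + b = 1)
    (h : a * X + b * Y = 0) : X * Y ≤ 0 := by
  by_contra hpos
  push_neg at hpos
  have hXne : X ≠ 0 := by intro h0; rw [h0] at hpos; simp at hpos
  have hYne : Y ≠ 0 := by intro h0; rw [h0] at hpos; simp at hpos
  rcases lt_or_gt_of_ne hXne with hX | hX <;> rcases lt_or_gt_of_ne hYne with hY | hY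
  · -- both negative
    have haX : 0 ≤ a * X → a = 0 := by
      intro hh
      rcases (mul_nonneg_iff).1 hh with ⟨h1, h2⟩ | ⟨h1, h2⟩ <;> [linarith; linarith]
    have h1 : a * X ≤ 0 := mul_nonpos_of_nonneg_of_nonpos ha (le_of_lt hX)
    have h2 : b * Y ≤ 0 := mul_nonpos_of_nonneg_of_nonpos hb (le_of_lt hY)
    have ha0 : a * X = 0 := by linarith
    have hb0 : b * Y = 0 := by linarith
    rcases mul_eq_zero.1 ha0 with h' | h' <;> rcases mul_eq_zero.1 hb0 with h'' | h''
    all_goals first | linarith | (exact absurd h' (ne_of_lt hX)) | (exact absurd h'' (ne_of_lt hY))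
  · nlinarith
  · nlinarith
  · -- both positive
    have h1 : 0 ≤ a * X := mul_nonneg ha (le_of_lt hX)
    have h2 : 0 ≤ b * Y := mul_nonneg hb (le_of_lt hY)
    have ha0 : a * X = 0 := by linarith
    have hb0 : b * Y = 0 := by linarith
    rcases mul_eq_zero.1 ha0 with h' | h' <;> rcases mul_eq_zero.1 hb0 with h'' | h''
    all_goals first | linarith | (exact absurd h' (ne_of_gt hX)) | (exact absurd h'' (ne_of_gt hY))

lemma affine_comb {a b : ℝ} {x y P : ℝ × ℝ} (c1 c2 p q : ℝ)
    (h : a • x + b • y = P) (hab : a + b = 1) :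
    c1 * (P.2 - q) - c2 * (P.1 - p) =
      a * (c1 * (x.2 - q) - c2 * (x.1 - p)) + b * (c1 * (y.2 - q) - c2 * (y.1 - p)) := by
  have h1 : a * x.1 + b * y.1 = P.1 := by
    have := congrArg Prod.fst h; simpa using this
  have h2 : a * x.2 + b * y.2 = P.2 := by
    have := congrArg Prod.snd h; simpa using this
  linear_combination c2 * h1 - c1 * h2 + (c1 * q - c2 * p) * hab

lemma tri_he (A X Y E : ℤ × ℤ) (S4 : Set (ℝ × ℝ))
    (hsub : ({intPairToR2 A, intPairToR2 X, intPairToR2 Y} : Set (ℝ × ℝ)) ⊆ S4)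
    (hempty' : ∀ z : ℤ × ℤ, intPairToR2 z ∈ convexHull ℝ S4 →
      z = A ∨ z = X ∨ z = Y ∨ z = E)
    (hE : intPairToR2 E ∉ convexHull ℝ
      ({intPairToR2 A, intPairToR2 X, intPairToR2 Y} : Set (ℝ × ℝ))) :
    ∀ z : ℤ × ℤ, ∀ α β : ℝ, 0 ≤ α → 0 ≤ β → α + β ≤ 1 →
      (z.1 : ℝ) = α * ((X - A).1 : ℤ) + β * ((Y - A).1 : ℤ) →
      (z.2 : ℝ) = α * ((X - A).2 : ℤ) + β * ((Y - A).2 : ℤ) →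
      z = 0 ∨ z = X - A ∨ z = Y - A := by
  intro z α β hα hβ hsum h1 h2
  push_cast [Prod.fst_sub, Prod.snd_sub] at h1 h2
  have hmem : intPairToR2 (A + z) ∈ convexHull ℝ
      ({intPairToR2 A, intPairToR2 X, intPairToR2 Y} : Set (ℝ × ℝ)) := by
    have heq : intPairToR2 (A + z) =
        (1 - α - β) • intPairToR2 A + α • intPairToR2 X + β • intPairToR2 Y := by
      unfold intPairToR2
      apply Prod.ext
      · simp [Prod.fst_add]
        push_cast
        linarith [h1]
      · simp [Prod.snd_add]
        push_cast
        linarith [h2]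
    rw [heq]
    exact mem_hull3 (by linarith) hα hβ (by ring)
  rcases hempty' (A + z) (convexHull_mono hsub hmem) with h | h | h | h
  · left
    have : A + z = A + 0 := by simpa using h
    exact add_left_cancel this
  · right; left
    exact eq_sub_of_add_eq' h
  · right; right
    exact eq_sub_of_add_eq' h
  · exact absurd (h ▸ hmem) hE

set_option maxHeartbeats 1000000 in
/-- An empty convex lattice quadrilateral (in cyclic order) is a parallelogram,
and in fact a fundamental parallelogram of `ℤ²`. -/
theorem empty_lattice_quadrilateral_is_fundamental_parallelogram (A B C D : ℤ × ℤ)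
    (hA : intPairToR2 A ∉ convexHull ℝ
      ({intPairToR2 B, intPairToR2 C, intPairToR2 D} : Set (ℝ × ℝ)))
    (hB : intPairToR2 B ∉ convexHull ℝ
      ({intPairToR2 A, intPairToR2 C, intPairToR2 D} : Set (ℝ × ℝ)))
    (hC : intPairToR2 C ∉ convexHull ℝ
      ({intPairToR2 A, intPairToR2 B, intPairToR2 D} : Set (ℝ × ℝ)))
    (hD : intPairToR2 D ∉ convexHull ℝ
      ({intPairToR2 A, intPairToR2 B, intPairToR2 C} : Set (ℝ × ℝ)))
    (hcyclic : (segment ℝ (intPairToR2 A) (intPairToR2 C) ∩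
      segment ℝ (intPairToR2 B) (intPairToR2 D)).Nonempty)
    (hempty : ∀ z : ℤ × ℤ, intPairToR2 z ∈ convexHull ℝ
      ({intPairToR2 A, intPairToR2 B, intPairToR2 C, intPairToR2 D} : Set (ℝ × ℝ)) →
      z = A ∨ z = B ∨ z = C ∨ z = D) :
    B - A = C - D ∧
    ((B - A).1 * (D - A).2 - (B - A).2 * (D - A).1 = 1 ∨
     (B - A).1 * (D - A).2 - (B - A).2 * (D - A).1 = -1) := by
  -- nondegeneracy of triangle ABC
  have hsne : (B.1 - A.1) * (C.2 - A.2) - (B.2 - A.2) * (C.1 - A.1) ≠ 0 := by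
    intro h0
    have h0R : ((B.1:ℝ) - A.1) * ((C.2:ℝ) - A.2) - ((B.2:ℝ) - A.2) * ((C.1:ℝ) - A.1) = 0 := by
      exact_mod_cast h0
    rcases between_of_det_zero (intPairToR2 A) (intPairToR2 B) (intPairToR2 C)
      (by simpa [intPairToR2] using h0R) with h | h | h
    · exact hA (segment_subset_convexHull (by simp) (by simp) h)
    · exact hB (segment_subset_convexHull (by simp) (by simp) h)
    · exact hC (segment_subset_convexHull (by simp) (by simp) h)
  -- nondegeneracy of triangle ABD
  have hkne : (B.1 - A.1) * (D.2 - A.2) - (B.2 - A.2) * (D.1 - A.1) ≠ 0 := by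
    intro h0
    have h0R : ((B.1:ℝ) - A.1) * ((D.2:ℝ) - A.2) - ((B.2:ℝ) - A.2) * ((D.1:ℝ) - A.1) = 0 := by
      exact_mod_cast h0
    rcases between_of_det_zero (intPairToR2 A) (intPairToR2 B) (intPairToR2 D)
      (by simpa [intPairToR2] using h0R) with h | h | h
    · exact hA (segment_subset_convexHull (by simp) (by simp) h)
    · exact hB (segment_subset_convexHull (by simp) (by simp) h)
    · exact hD (segment_subset_convexHull (by simp) (by simp) h)
  -- nondegeneracy of triangle ACD
  have htne : (C.1 - A.1) * (D.2 - A.2) - (C.2 - A.2) * (D.1 - A.1) ≠ 0 := by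
    intro h0
    have h0R : ((C.1:ℝ) - A.1) * ((D.2:ℝ) - A.2) - ((C.2:ℝ) - A.2) * ((D.1:ℝ) - A.1) = 0 := by
      exact_mod_cast h0
    rcases between_of_det_zero (intPairToR2 A) (intPairToR2 C) (intPairToR2 D)
      (by simpa [intPairToR2] using h0R) with h | h | h
    · exact hA (segment_subset_convexHull (by simp) (by simp) h)
    · exact hC (segment_subset_convexHull (by simp) (by simp) h)
    · exact hD (segment_subset_convexHull (by simp) (by simp) h)
  -- the three empty triangles give determinants ±1
  have hsub1 : ({intPairToR2 A, intPairToR2 B, intPairToR2 C} : Set (ℝ × ℝ)) ⊆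
      {intPairToR2 A, intPairToR2 B, intPairToR2 C, intPairToR2 D} := by
    intro x hx; simp at hx ⊢; tauto
  have hsub2 : ({intPairToR2 A, intPairToR2 B, intPairToR2 D} : Set (ℝ × ℝ)) ⊆
      {intPairToR2 A, intPairToR2 B, intPairToR2 C, intPairToR2 D} := by
    intro x hx; simp at hx ⊢; tauto
  have hsub3 : ({intPairToR2 A, intPairToR2 C, intPairToR2 D} : Set (ℝ × ℝ)) ⊆
      {intPairToR2 A, intPairToR2 B, intPairToR2 C, intPairToR2 D} := by
    intro x hx; simp at hx ⊢; tauto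
  have hs := det_pm_one_of_empty (B - A) (C - A)
    (by simpa [Prod.fst_sub, Prod.snd_sub] using hsne)
    (tri_he A B C D _ hsub1 hempty hD)
  have hk := det_pm_one_of_empty (B - A) (D - A)
    (by simpa [Prod.fst_sub, Prod.snd_sub] using hkne)
    (tri_he A B D C _ hsub2 (fun z hz => by rcases hempty z hz with h|h|h|h <;> tauto) hC)
  have ht := det_pm_one_of_empty (C - A) (D - A)
    (by simpa [Prod.fst_sub, Prod.snd_sub] using htne)
    (tri_he A C D B _ hsub3 (fun z hz => by rcases hempty z hz with h|h|h|h <;> tauto) hB)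
  simp only [Prod.fst_sub, Prod.snd_sub] at hs hk ht
  -- the crossing point
  obtain ⟨P, hPAC, hPBD⟩ := hcyclic
  obtain ⟨aP, bP, haP, hbP, habP, hPeq⟩ := hPAC
  obtain ⟨aQ, bQ, haQ, hbQ, habQ, hQeq⟩ := hPBD
  -- first crossing inequality : s*t ≥ 0
  have hcomb1 : aQ * (((C.1:ℝ) - A.1) * ((B.2:ℝ) - A.2) - ((C.2:ℝ) - A.2) * ((B.1:ℝ) - A.1))
      + bQ * (((C.1:ℝ) - A.1) * ((D.2:ℝ) - A.2) - ((C.2:ℝ) - A.2) * ((D.1:ℝ) - A.1)) = 0 := by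
    have h1 := affine_comb ((C.1:ℝ) - A.1) ((C.2:ℝ) - A.2) (A.1:ℝ) (A.2:ℝ) hQeq habQ
    have h2 := affine_comb ((C.1:ℝ) - A.1) ((C.2:ℝ) - A.2) (A.1:ℝ) (A.2:ℝ) hPeq habP
    simp only [intPairToR2] at h1 h2
    linear_combination h2 - h1
  have hXY1 := sign_aux haQ hbQ habQ hcomb1
  have hst : 0 ≤ ((B.1 - A.1) * (C.2 - A.2) - (B.2 - A.2) * (C.1 - A.1)) *
      ((C.1 - A.1) * (D.2 - A.2) - (C.2 - A.2) * (D.1 - A.1)) := by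
    have hR : (0:ℝ) ≤ ((((B.1 - A.1) * (C.2 - A.2) - (B.2 - A.2) * (C.1 - A.1)) *
        ((C.1 - A.1) * (D.2 - A.2) - (C.2 - A.2) * (D.1 - A.1)) : ℤ) : ℝ) := by
      push_cast
      linarith [hXY1]
    exact_mod_cast hR
  -- second crossing inequality : k*(k - s - t) ≤ 0
  have hcomb2 : aP * (((D.1:ℝ) - B.1) * ((A.2:ℝ) - B.2) - ((D.2:ℝ) - B.2) * ((A.1:ℝ) - B.1))
      + bP * (((D.1:ℝ) - B.1) * ((C.2:ℝ) - B.2) - ((D.2:ℝ) - B.2) * ((C.1:ℝ) - B.1)) = 0 := by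
    have h1 := affine_comb ((D.1:ℝ) - B.1) ((D.2:ℝ) - B.2) (B.1:ℝ) (B.2:ℝ) hPeq habP
    have h2 := affine_comb ((D.1:ℝ) - B.1) ((D.2:ℝ) - B.2) (B.1:ℝ) (B.2:ℝ) hQeq habQ
    simp only [intPairToR2] at h1 h2
    linear_combination h2 - h1
  have hXY2 := sign_aux haP hbP habP hcomb2
  have hineq : ((B.1 - A.1) * (D.2 - A.2) - (B.2 - A.2) * (D.1 - A.1)) *
      (((B.1 - A.1) * (D.2 - A.2) - (B.2 - A.2) * (D.1 - A.1))
        - ((B.1 - A.1) * (C.2 - A.2) - (B.2 - A.2) * (C.1 - A.1))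
        - ((C.1 - A.1) * (D.2 - A.2) - (C.2 - A.2) * (D.1 - A.1))) ≤ 0 := by
    have hR : ((((B.1 - A.1) * (D.2 - A.2) - (B.2 - A.2) * (D.1 - A.1)) *
        (((B.1 - A.1) * (D.2 - A.2) - (B.2 - A.2) * (D.1 - A.1))
          - ((B.1 - A.1) * (C.2 - A.2) - (B.2 - A.2) * (C.1 - A.1))
          - ((C.1 - A.1) * (D.2 - A.2) - (C.2 - A.2) * (D.1 - A.1))) : ℤ) : ℝ) ≤ 0 := by
      push_cast
      linarith [hXY2]
    exact_mod_cast hR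
  -- Plücker identities
  have hpl1 : ((C.1 - A.1) * (D.2 - A.2) - (C.2 - A.2) * (D.1 - A.1)) * (B.1 - A.1)
      - ((B.1 - A.1) * (D.2 - A.2) - (B.2 - A.2) * (D.1 - A.1)) * (C.1 - A.1)
      + ((B.1 - A.1) * (C.2 - A.2) - (B.2 - A.2) * (C.1 - A.1)) * (D.1 - A.1) = 0 := by ring
  have hpl2 : ((C.1 - A.1) * (D.2 - A.2) - (C.2 - A.2) * (D.1 - A.1)) * (B.2 - A.2)
      - ((B.1 - A.1) * (D.2 - A.2) - (B.2 - A.2) * (D.1 - A.1)) * (C.2 - A.2)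
      + ((B.1 - A.1) * (C.2 - A.2) - (B.2 - A.2) * (C.1 - A.1)) * (D.2 - A.2) = 0 := by ring
  -- final case analysis
  constructor
  · rw [Prod.ext_iff]
    simp only [Prod.fst_sub, Prod.snd_sub]
    rcases hs with hs' | hs' <;> rcases ht with ht' | ht' <;> rcases hk with hk' | hk' <;>
      rw [hs', ht'] at hst <;> rw [hk', hs', ht'] at hineq <;>
      rw [hs', ht', hk'] at hpl1 hpl2 <;>
      first
        | (constructor <;> linarith [hpl1, hpl2])
        | (norm_num at hst)
        | (norm_num at hineq)
  · simp only [Prod.fst_sub, Prod.snd_sub]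
    exact hk
end

section
/- There is no empty convex lattice pentagon: if A₁, …, A₅ are five distinct points of ℤ² in convex position (each a vertex of the convex hull of {A₁,…,A₅}), then the convex hull of {A₁,…,A₅} contains a point of ℤ² different from A₁, …, A₅. -/
/-- There is no empty convex lattice pentagon: the convex hull of any five lattice points
in convex position contains a further lattice point. -/
theorem no_empty_lattice_pentagon (A : Fin 5 → ℤ × ℤ)
    (hinj : Function.Injective A)
    (hvert : ∀ i, intPairToR2 (A i) ∉
      convexHull ℝ ((fun j => intPairToR2 (A j)) '' {j | j ≠ i})) :
    ∃ z : ℤ × ℤ, intPairToR2 z ∈ convexHull ℝ (Set.range (fun i => intPairToR2 (A i))) ∧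
      ∀ i, z ≠ A i := by
  -- pigeonhole on parities
  obtain ⟨i, j, hij, hpar⟩ :=
    Fintype.exists_ne_map_eq_of_card_lt
      (fun i : Fin 5 => ((((A i).1 : ZMod 2), ((A i).2 : ZMod 2)) : ZMod 2 × ZMod 2))
      (by simp)
  have h1 : (2 : ℤ) ∣ (A i).1 + (A j).1 := by
    have := congrArg Prod.fst hpar
    have h2 : (((A i).1 + (A j).1 : ℤ) : ZMod 2) = 0 := by
      push_cast
      simp only at this
      rw [this, CharTwo.add_self_eq_zero]
    exact (ZMod.intCast_zmod_eq_zero_iff_dvd _ 2).mp h2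
  have h2 : (2 : ℤ) ∣ (A i).2 + (A j).2 := by
    have := congrArg Prod.snd hpar
    have h2 : (((A i).2 + (A j).2 : ℤ) : ZMod 2) = 0 := by
      push_cast
      simp only at this
      rw [this, CharTwo.add_self_eq_zero]
    exact (ZMod.intCast_zmod_eq_zero_iff_dvd _ 2).mp h2
  obtain ⟨c, hc⟩ := h1
  obtain ⟨d, hd⟩ := h2
  refine ⟨(c, d), ?_, ?_⟩
  · have hmid : intPairToR2 (c, d) =
        midpoint ℝ (intPairToR2 (A i)) (intPairToR2 (A j)) := by
      have hcr : (c : ℝ) = (((A i).1 : ℝ) + ((A j).1 : ℝ)) / 2 := by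
        have : ((A i).1 : ℝ) + ((A j).1 : ℝ) = 2 * (c : ℝ) := by exact_mod_cast congrArg Int.cast hc
        linarith
      have hdr : (d : ℝ) = (((A i).2 : ℝ) + ((A j).2 : ℝ)) / 2 := by
        have : ((A i).2 : ℝ) + ((A j).2 : ℝ) = 2 * (d : ℝ) := by exact_mod_cast congrArg Int.cast hd
        linarith
      simp [intPairToR2, midpoint, Prod.ext_iff, hcr, hdr]
      constructor <;> (simp [AffineMap.lineMap_apply]; ring)
    rw [hmid]
    exact segment_subset_convexHull (Set.mem_range_self i) (Set.mem_range_self j) (midpoint_mem_segment _ _)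
  · intro k hk
    -- z = A k
    by_cases hki : k = i
    · subst hki
      -- then A j = A k
      apply hij
      apply hinj
      have h1' : (A j).1 = (A k).1 := by
        have : (A k).1 = c := congrArg Prod.fst hk.symm
        omega
      have h2' : (A j).2 = (A k).2 := by
        have : (A k).2 = d := congrArg Prod.snd hk.symm
        omega
      exact Prod.ext h1'.symm h2'.symm
    · by_cases hkj : k = j
      · subst hkj
        apply hij
        apply hinj
        have h1' : (A i).1 = (A k).1 := by
          have : (A k).1 = c := congrArg Prod.fst hk.symm
          omega
        have h2' : (A i).2 = (A k).2 := by
          have : (A k).2 = d := congrArg Prod.snd hk.symm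
          omega
        exact Prod.ext h1' h2'
      · apply hvert k
        have hmid : intPairToR2 (A k) =
            midpoint ℝ (intPairToR2 (A i)) (intPairToR2 (A j)) := by
          rw [← hk]
          have hcr : (c : ℝ) = (((A i).1 : ℝ) + ((A j).1 : ℝ)) / 2 := by
            have : ((A i).1 : ℝ) + ((A j).1 : ℝ) = 2 * (c : ℝ) := by
              exact_mod_cast congrArg Int.cast hc
            linarith
          have hdr : (d : ℝ) = (((A i).2 : ℝ) + ((A j).2 : ℝ)) / 2 := by
            have : ((A i).2 : ℝ) + ((A j).2 : ℝ) = 2 * (d : ℝ) := by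
              exact_mod_cast congrArg Int.cast hd
            linarith
          simp [intPairToR2, midpoint, Prod.ext_iff, hcr, hdr]
          constructor <;> (simp [AffineMap.lineMap_apply]; ring)
        rw [hmid]
        have hi' : i ∈ {j' : Fin 5 | j' ≠ k} := fun h => hki h.symm
        have hj' : j ∈ {j' : Fin 5 | j' ≠ k} := fun h => hkj h.symm
        exact segment_subset_convexHull (Set.mem_image_of_mem _ hi')
          (Set.mem_image_of_mem _ hj') (midpoint_mem_segment _ _)
end

section
/- Let x, y be real numbers with y > 1, and let T be the triangle with vertices A = (0,0), B = (1,0), M = (x,y) in ℝ². Then T contains the point (⌊x/y⌋ + 1, 1) or T contains the point (x − ⌊x/y⌋, y − 1), where ⌊·⌋ denotes the floor function. (The first point is an integer point distinct from A, B, M, and the second point belongs to the translate M + ℤ² and is distinct from M; in either case the triangle ABM contains a point of ℤ² ∪ (M + ℤ²) other than its vertices.) -/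
lemma mem_tri (A B C : ℝ × ℝ) (a b c : ℝ) (ha : 0 ≤ a) (hb : 0 ≤ b) (hc : 0 ≤ c)
    (h : a + b + c = 1) :
    a • A + b • B + c • C ∈ convexHull ℝ ({A, B, C} : Set (ℝ × ℝ)) := by
  have := (convex_convexHull ℝ ({A, B, C} : Set (ℝ × ℝ))).sum_mem
    (t := (Finset.univ : Finset (Fin 3))) (w := ![a, b, c]) (z := ![A, B, C])
    (by intro i _; fin_cases i <;> simpa)
    (by simp [Fin.sum_univ_three, h])
    (by intro i _; fin_cases i <;> exact subset_convexHull _ _ (by simp))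
  simpa [Fin.sum_univ_three] using this

/-- The triangle with vertices `(0,0)`, `(1,0)`, `(x,y)` with `y > 1` contains the integer
point `(⌊x/y⌋ + 1, 1)` or the point `(x − ⌊x/y⌋, y − 1)` of the translate `(x,y) + ℤ²`;
in either case this point is distinct from the three vertices. -/
theorem triangle_contains_lattice_or_translate_point (x y : ℝ) (hy : 1 < y)
    (T : Set (ℝ × ℝ))
    (hT : T = convexHull ℝ ({((0 : ℝ), (0 : ℝ)), (1, 0), (x, y)} : Set (ℝ × ℝ))) :
    (((⌊x / y⌋ : ℝ) + 1, (1 : ℝ)) ∈ T ∧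
      ((⌊x / y⌋ : ℝ) + 1, (1 : ℝ)) ≠ ((0 : ℝ), (0 : ℝ)) ∧
      ((⌊x / y⌋ : ℝ) + 1, (1 : ℝ)) ≠ ((1 : ℝ), (0 : ℝ)) ∧
      ((⌊x / y⌋ : ℝ) + 1, (1 : ℝ)) ≠ (x, y)) ∨
    ((x - (⌊x / y⌋ : ℝ), y - 1) ∈ T ∧
      (x - (⌊x / y⌋ : ℝ), y - 1) ≠ ((0 : ℝ), (0 : ℝ)) ∧
      (x - (⌊x / y⌋ : ℝ), y - 1) ≠ ((1 : ℝ), (0 : ℝ)) ∧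
      (x - (⌊x / y⌋ : ℝ), y - 1) ≠ (x, y)) := by
  have hy0 : (0 : ℝ) < y := lt_trans one_pos hy
  set f : ℝ := (⌊x / y⌋ : ℝ) with hf
  have hfle : f ≤ x / y := Int.floor_le _
  have hflt : x / y < f + 1 := Int.lt_floor_add_one _
  have hfy : f * y ≤ x := by
    rw [le_div_iff₀ hy0] at hfle; linarith
  have hfy' : x < (f + 1) * y := by
    rw [div_lt_iff₀ hy0] at hflt; linarith
  rcases le_total 1 (x - f * y) with h | h
  · left
    refine ⟨?_, ?_, ?_, ?_⟩
    · rw [hT]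
      have key : (x / y - f - 1 / y) • ((0 : ℝ), (0 : ℝ)) + (f + 1 - x / y) • ((1 : ℝ), (0 : ℝ))
          + (1 / y) • (x, y) = ((f : ℝ) + 1, (1 : ℝ)) := by
        simp [Prod.ext_iff, Prod.smul_def, smul_eq_mul]
        constructor <;> field_simp <;> ring
      rw [← key]
      apply mem_tri
      · have e : x / y - f - 1 / y = (x - f * y - 1) / y := by field_simp
        rw [e]; exact div_nonneg (by linarith) hy0.le
      · linarith
      · positivity
      · ring
    · simp [Prod.ext_iff]
    · simp [Prod.ext_iff]
    · intro h'; rw [Prod.mk.injEq] at h'; linarith [h'.2]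
  · right
    refine ⟨?_, ?_, ?_, ?_⟩
    · rw [hT]
      have key : (f + 1 / y - x / y) • ((0 : ℝ), (0 : ℝ)) + (x / y - f) • ((1 : ℝ), (0 : ℝ))
          + ((y - 1) / y) • (x, y) = (x - f, y - 1) := by
        simp [Prod.ext_iff, Prod.smul_def, smul_eq_mul]
        constructor <;> field_simp <;> ring
      rw [← key]
      apply mem_tri
      · have e : f + 1 / y - x / y = (f * y + 1 - x) / y := by field_simp
        rw [e]; exact div_nonneg (by linarith) hy0.le
      · linarith
      · exact div_nonneg (by linarith) hy0.le
      · field_simp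
        ring
    · intro h'; rw [Prod.mk.injEq] at h'; linarith [h'.2]
    · intro h'; rw [Prod.mk.injEq] at h'; linarith [h'.2]
    · intro h'; rw [Prod.mk.injEq] at h'; linarith [h'.2]
end

section
/- (Doignon's theorem) Let F be a finite family of convex subsets of ℝ^d with at least 2^d members. If every 2^d members of F have a common point belonging to ℤ^d, then all members of F have a common point belonging to ℤ^d. -/
namespace DoignonAux

variable {d : ℕ}

/-- cast a lattice point to `ℝ^d` -/
def toR (z : Fin d → ℤ) : Fin d → ℝ := fun j => (z j : ℝ)

lemma toR_inj : Function.Injective (toR (d := d)) := by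
  intro x y h
  funext j
  have := congrFun h j
  simpa [toR] using this

/-- hull of a finite set of lattice points -/
def LH (V : Finset (Fin d → ℤ)) : Set (Fin d → ℝ) :=
  convexHull ℝ (toR '' (V : Set (Fin d → ℤ)))

lemma LH_mono {V W : Finset (Fin d → ℤ)} (h : V ⊆ W) : LH V ⊆ LH W :=
  convexHull_mono (Set.image_mono (by exact_mod_cast h))

lemma mem_LH_of_mem {V : Finset (Fin d → ℤ)} {v : Fin d → ℤ} (hv : v ∈ V) :
    toR v ∈ LH V :=
  subset_convexHull _ _ ⟨v, by exact_mod_cast hv, rfl⟩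

lemma LH_insert_eq (p : Fin d → ℤ) (S : Finset (Fin d → ℤ)) :
    LH (insert p S) = convexHull ℝ (insert (toR p) (toR '' (S : Set (Fin d → ℤ)))) := by
  rw [LH, Finset.coe_insert, Set.image_insert_eq]

lemma LH_insert_subset {V W : Finset (Fin d → ℤ)} {p : Fin d → ℤ}
    (hp : toR p ∈ LH W) (h : V ⊆ W) : LH (insert p V) ⊆ LH W := by
  apply convexHull_min _ (convex_convexHull _ _)
  rw [Finset.coe_insert, Set.image_insert_eq]
  rintro x (rfl | hx)
  · exact hp
  · exact subset_convexHull _ _ (Set.image_mono (by exact_mod_cast h) hx)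

/-- The key substitution lemma. -/
lemma key {x w : Fin d → ℝ} {A B : Set (Fin d → ℝ)}
    (hx : x ∈ convexHull ℝ (insert w A)) (hw : w ∈ convexHull ℝ (insert x B))
    (hxw : x ≠ w) : x ∈ convexHull ℝ (A ∪ B) := by
  rcases A.eq_empty_or_nonempty with rfl | hA
  · have : (insert w (∅ : Set (Fin d → ℝ))) = {w} := by simp
    rw [this, convexHull_singleton] at hx
    exact absurd hx hxw
  rcases B.eq_empty_or_nonempty with rfl | hB
  · have : (insert x (∅ : Set (Fin d → ℝ))) = {x} := by simp
    rw [this, convexHull_singleton] at hw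
    exact absurd hw.symm hxw
  rw [convexHull_insert hA, mem_convexJoin] at hx
  rw [convexHull_insert hB, mem_convexJoin] at hw
  obtain ⟨w', hw', u, hu, hxu⟩ := hx
  obtain ⟨x', hx', v, hv, hwv⟩ := hw
  rw [Set.mem_singleton_iff] at hw' hx'
  subst hw' hx'
  obtain ⟨α, β, hα, hβ, hαβ, hxe⟩ := hxu
  obtain ⟨γ, δ, hγ, hδ, hγδ, hwe⟩ := hwv
  have hne : 1 - α * γ ≠ 0 := by
    intro h
    have hα1 : α = 1 := by nlinarith
    have hγ1 : γ = 1 := by nlinarith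
    have hβ0 : β = 0 := by nlinarith
    apply hxw
    rw [← hxe, hα1, hβ0, one_smul, zero_smul, add_zero]
  have hpos : 0 < 1 - α * γ := by
    rcases lt_or_eq_of_le (by nlinarith : α * γ ≤ 1) with h | h
    · linarith
    · exact absurd (by linarith) hne
  have h1 : α • (γ • x' + δ • v) + β • u = x' := by rw [hwe, hxe]
  rw [smul_add, smul_smul, smul_smul] at h1
  have h2 : x' - (α * γ) • x' = (α * δ) • v + β • u := by
    rw [sub_eq_iff_eq_add']
    rw [← add_assoc]
    exact h1.symm
  have hrepr : (1 - α * γ) • x' = (α * δ) • v + β • u := by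
    rw [sub_smul, one_smul]
    exact h2
  have hfin : x' = ((1 - α * γ)⁻¹ * (α * δ)) • v + ((1 - α * γ)⁻¹ * β) • u := by
    have h2 := congrArg (fun t => (1 - α * γ)⁻¹ • t) hrepr
    simp only [smul_smul, smul_add] at h2
    rw [inv_mul_cancel₀ hne, one_smul] at h2
    exact h2
  have huAB : u ∈ convexHull ℝ (A ∪ B) := convexHull_mono Set.subset_union_left hu
  have hvAB : v ∈ convexHull ℝ (A ∪ B) := convexHull_mono Set.subset_union_right hv
  rw [hfin]
  apply (convex_convexHull ℝ (A ∪ B)) hvAB huAB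
  · positivity
  · positivity
  · rw [← mul_add, inv_mul_eq_one₀ hne]
    linear_combination -α * hγδ - hαβ

lemma latFin (V : Finset (Fin d → ℤ)) : {z : Fin d → ℤ | toR z ∈ LH V}.Finite := by
  set R : ℕ := V.sup fun v => Finset.univ.sup fun j => (v j).natAbs with hR
  have hbound : ∀ x ∈ LH V, ∀ j, |x j| ≤ (R : ℝ) := by
    have hconv : Convex ℝ {x : Fin d → ℝ | ∀ j, |x j| ≤ (R : ℝ)} := by
      intro x hx y hy α β hα hβ hαβ j
      calc |(α • x + β • y) j| = |α * x j + β * y j| := rfl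
        _ ≤ |α * x j| + |β * y j| := abs_add_le _ _
        _ = α * |x j| + β * |y j| := by
            rw [abs_mul, abs_mul, abs_of_nonneg hα, abs_of_nonneg hβ]
        _ ≤ α * R + β * R := by
            gcongr
            exacts [hx j, hy j]
        _ = (R : ℝ) := by rw [← add_mul, hαβ, one_mul]
    intro x hx
    refine convexHull_min ?_ hconv hx
    rintro _ ⟨v, hv, rfl⟩ j
    have hv' : v ∈ V := by exact_mod_cast hv
    have h1 : (v j).natAbs ≤ R := by
      refine le_trans (Finset.le_sup (f := fun j => (v j).natAbs) (Finset.mem_univ j)) ?_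
      exact Finset.le_sup (f := fun w : Fin d → ℤ => Finset.univ.sup fun j => (w j).natAbs) hv'
    have : |v j| ≤ (R : ℤ) := by
      rw [Int.abs_eq_natAbs]
      exact_mod_cast h1
    calc |toR v j| = |(v j : ℝ)| := rfl
      _ = ((|v j| : ℤ) : ℝ) := by rw [Int.cast_abs]
      _ ≤ ((R : ℤ) : ℝ) := by exact_mod_cast this
      _ = (R : ℝ) := by push_cast; ring
  apply Set.Finite.subset (Finset.Icc (fun _ => -(R : ℤ)) (fun _ => (R : ℤ))).finite_toSet
  intro z hz
  simp only [Finset.coe_Icc, Set.mem_Icc]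
  have key : ∀ j, |z j| ≤ (R : ℤ) := by
    intro j
    have h2 : |(z j : ℝ)| ≤ (R : ℝ) := hbound _ hz j
    have h4 : ((|z j| : ℤ) : ℝ) ≤ ((R : ℤ) : ℝ) := by
      rw [← Int.cast_abs] at h2
      exact_mod_cast h2
    exact_mod_cast h4
  constructor <;> intro j
  · show -(R : ℤ) ≤ z j
    exact (abs_le.1 (key j)).1
  · show z j ≤ (R : ℤ)
    exact (abs_le.1 (key j)).2

noncomputable def mu (V : Finset (Fin d → ℤ)) : ℕ := (latFin V).toFinset.card

lemma mem_muset (V : Finset (Fin d → ℤ)) (z : Fin d → ℤ) :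
    z ∈ (latFin V).toFinset ↔ toR z ∈ LH V := by
  simp [Set.Finite.mem_toFinset]

lemma mu_lt {V W : Finset (Fin d → ℤ)} (h : LH W ⊆ LH V) (w : Fin d → ℤ)
    (hw1 : toR w ∈ LH V) (hw2 : toR w ∉ LH W) : mu W < mu V := by
  apply Finset.card_lt_card
  constructor
  · intro z hz
    rw [mem_muset] at hz ⊢
    exact h hz
  · intro hsub
    have := hsub ((mem_muset V w).2 hw1)
    exact hw2 ((mem_muset W w).1 this)

lemma mid_mem {a b y : Fin d → ℤ} (h2y : ∀ j, 2 * y j = a j + b j)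
    {s : Set (Fin d → ℝ)} (hs : Convex ℝ s) (hsa : toR a ∈ s) (hsb : toR b ∈ s) :
    toR y ∈ s := by
  have hmid : toR y = (1/2 : ℝ) • toR a + (1/2 : ℝ) • toR b := by
    funext j
    have h := h2y j
    have h' : (2 : ℝ) * (y j : ℝ) = (a j : ℝ) + (b j : ℝ) := by exact_mod_cast h
    show (y j : ℝ) = (1/2 : ℝ) * (a j : ℝ) + (1/2 : ℝ) * (b j : ℝ)
    linarith
  rw [hmid]
  exact hs hsa hsb (by norm_num) (by norm_num) (by norm_num)


lemma aux (V : Finset (Fin d → ℤ))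
    (IH : ∀ W : Finset (Fin d → ℤ), mu W < mu V → W.card = 2 ^ d + 1 →
      ∃ z, ∀ v ∈ W, toR z ∈ LH (W.erase v))
    (hcard : V.card = 2 ^ d + 1)
    (indep : ∀ c ∈ V, toR c ∉ LH (V.erase c))
    {a b y : Fin d → ℤ} (ha : a ∈ V) (hb : b ∈ V) (hab : a ≠ b)
    (h2y : ∀ j, 2 * y j = a j + b j)
    (hyV : y ∉ V)
    (hyA : toR y ∉ LH (V.erase a)) :
    ∃ z, ∀ v ∈ V, toR z ∈ LH (V.erase v) := by
  have hbea : b ∈ V.erase a := Finset.mem_erase.2 ⟨Ne.symm hab, hb⟩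
  have haeb : a ∈ V.erase b := Finset.mem_erase.2 ⟨hab, ha⟩
  have hyne : ∀ c ∈ V, y ≠ c := fun c hc h => hyV (h ▸ hc)
  have hya : y ≠ a := hyne a ha
  have hyb : y ≠ b := hyne b hb
  have hymemLH : ∀ {W : Finset (Fin d → ℤ)}, a ∈ W → b ∈ W → toR y ∈ LH W :=
    fun haW hbW =>
      mid_mem h2y (convex_convexHull _ _) (mem_LH_of_mem haW) (mem_LH_of_mem hbW)
  have hpairma : toR y ∈ convexHull ℝ (insert (toR a) {toR b}) :=
    mid_mem h2y (convex_convexHull _ _)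
      (subset_convexHull _ _ (Set.mem_insert _ _))
      (subset_convexHull _ _ (Set.mem_insert_of_mem _ rfl))
  have hpairmb : toR y ∈ convexHull ℝ (insert (toR b) {toR a}) :=
    mid_mem h2y (convex_convexHull _ _)
      (subset_convexHull _ _ (Set.mem_insert_of_mem _ rfl))
      (subset_convexHull _ _ (Set.mem_insert _ _))
  set V' : Finset (Fin d → ℤ) := insert y (V.erase a) with hV'
  have hyVa : y ∉ V.erase a := fun h => hyV (Finset.mem_of_mem_erase h)
  have hcard' : V'.card = 2 ^ d + 1 := by
    rw [hV', Finset.card_insert_of_notMem hyVa, Finset.card_erase_of_mem ha, hcard]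
    rw [Nat.add_sub_cancel]
  have haV' : toR a ∉ LH V' := by
    intro h
    rw [hV', LH_insert_eq] at h
    have hxw : toR a ≠ toR y := fun he => hya ((toR_inj he).symm)
    have hk := key h hpairma hxw
    have hunion : toR '' ((V.erase a : Finset (Fin d → ℤ)) : Set (Fin d → ℤ)) ∪ {toR b} =
        toR '' ((V.erase a : Finset (Fin d → ℤ)) : Set (Fin d → ℤ)) :=
      Set.union_eq_self_of_subset_right
        (Set.singleton_subset_iff.2 ⟨b, by exact_mod_cast hbea, rfl⟩)
    rw [hunion] at hk
    exact indep a ha hk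
  have hsub' : LH V' ⊆ LH V := LH_insert_subset (hymemLH ha hb) (Finset.erase_subset _ _)
  have hmu' : mu V' < mu V := mu_lt hsub' a (mem_LH_of_mem ha) haV'
  obtain ⟨z₀, hz₀⟩ := IH V' hmu' hcard'
  have hVey : V'.erase y = V.erase a := by rw [hV']; exact Finset.erase_insert hyVa
  have hz₀a : toR z₀ ∈ LH (V.erase a) := by
    rw [← hVey]
    exact hz₀ y (Finset.mem_insert_self _ _)
  have hz₀c : ∀ c ∈ V, c ≠ a → c ≠ b → toR z₀ ∈ LH (V.erase c) := by
    intro c hc hca hcb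
    have hcV' : c ∈ V' := Finset.mem_insert_of_mem (Finset.mem_erase.2 ⟨hca, hc⟩)
    have h1 := hz₀ c hcV'
    have heq : V'.erase c = insert y ((V.erase a).erase c) := by
      rw [hV']; exact Finset.erase_insert_of_ne (hyne c hc)
    rw [heq] at h1
    refine LH_insert_subset ?_ ?_ h1
    · exact hymemLH (Finset.mem_erase.2 ⟨Ne.symm hca, ha⟩) (Finset.mem_erase.2 ⟨Ne.symm hcb, hb⟩)
    · exact Finset.erase_subset_erase _ (Finset.erase_subset _ _)
  by_cases hz₀b : toR z₀ ∈ LH (V.erase b)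
  · refine ⟨z₀, fun v hv => ?_⟩
    by_cases hva : v = a
    · subst hva; exact hz₀a
    by_cases hvb : v = b
    · subst hvb; exact hz₀b
    exact hz₀c v hv hva hvb
  · have hz₀neb : z₀ ≠ b := by
      intro he
      have hbV' : b ∈ V' := Finset.mem_insert_of_mem hbea
      have h1 : toR b ∈ LH (V'.erase b) := he ▸ hz₀ b hbV'
      have heq : V'.erase b = insert y ((V.erase a).erase b) := by
        rw [hV']; exact Finset.erase_insert_of_ne hyb
      rw [heq, LH_insert_eq] at h1
      have hxw : toR b ≠ toR y := fun he' => hyb ((toR_inj he').symm)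
      have hk := key h1 hpairmb hxw
      have hss : toR '' (((V.erase a).erase b : Finset (Fin d → ℤ)) : Set (Fin d → ℤ)) ∪ {toR a} ⊆
          toR '' ((V.erase b : Finset (Fin d → ℤ)) : Set (Fin d → ℤ)) := by
        apply Set.union_subset
        · apply Set.image_mono
          have : (V.erase a).erase b ⊆ V.erase b :=
            Finset.erase_subset_erase _ (Finset.erase_subset _ _)
          exact_mod_cast this
        · exact Set.singleton_subset_iff.2 ⟨a, by exact_mod_cast haeb, rfl⟩
      exact indep b hb (convexHull_mono hss hk)
    have hz₀V : z₀ ∉ V := by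
      intro hz
      by_cases h1 : z₀ = a
      · exact indep a ha (h1 ▸ hz₀a)
      by_cases h2 : z₀ = b
      · exact hz₀neb h2
      exact indep z₀ hz (hz₀c z₀ hz h1 h2)
    have hz₀Vb : z₀ ∉ V.erase b := fun h => hz₀V (Finset.mem_of_mem_erase h)
    set V3 : Finset (Fin d → ℤ) := insert z₀ (V.erase b) with hV3
    have hcard3 : V3.card = 2 ^ d + 1 := by
      rw [hV3, Finset.card_insert_of_notMem hz₀Vb, Finset.card_erase_of_mem hb, hcard]
      rw [Nat.add_sub_cancel]
    have hz₀V' : toR z₀ ∈ LH V := LH_mono (Finset.erase_subset _ _) hz₀a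
    have hsub3 : LH V3 ⊆ LH V := LH_insert_subset hz₀V' (Finset.erase_subset _ _)
    have hbV3 : toR b ∉ LH V3 := by
      intro h
      rw [hV3, LH_insert_eq] at h
      have hw : toR z₀ ∈ convexHull ℝ (insert (toR b)
          (toR '' (((V.erase a).erase b : Finset (Fin d → ℤ)) : Set (Fin d → ℤ)))) := by
        have heq : V.erase a = insert b ((V.erase a).erase b) := (Finset.insert_erase hbea).symm
        have h' := hz₀a
        rw [LH, heq, Finset.coe_insert, Set.image_insert_eq] at h'
        exact h'
      have hxw : toR b ≠ toR z₀ := fun he => hz₀neb ((toR_inj he).symm)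
      have hk := key h hw hxw
      have hss : toR '' ((V.erase b : Finset (Fin d → ℤ)) : Set (Fin d → ℤ)) ∪
          toR '' (((V.erase a).erase b : Finset (Fin d → ℤ)) : Set (Fin d → ℤ)) ⊆
          toR '' ((V.erase b : Finset (Fin d → ℤ)) : Set (Fin d → ℤ)) := by
        apply Set.union_subset subset_rfl
        apply Set.image_mono
        have : (V.erase a).erase b ⊆ V.erase b :=
          Finset.erase_subset_erase _ (Finset.erase_subset _ _)
        exact_mod_cast this
      exact indep b hb (convexHull_mono hss hk)
    have hmu3 : mu V3 < mu V := mu_lt hsub3 b (mem_LH_of_mem hb) hbV3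
    obtain ⟨w₀, hw₀⟩ := IH V3 hmu3 hcard3
    refine ⟨w₀, fun v hv => ?_⟩
    by_cases hvb : v = b
    · have heq : V3.erase z₀ = V.erase b := by rw [hV3]; exact Finset.erase_insert hz₀Vb
      rw [hvb, ← heq]
      exact hw₀ z₀ (Finset.mem_insert_self _ _)
    · have hvV3 : v ∈ V3 := Finset.mem_insert_of_mem (Finset.mem_erase.2 ⟨hvb, hv⟩)
      have h1 := hw₀ v hvV3
      have hz₀v : z₀ ≠ v := fun h => hz₀V (h ▸ hv)
      have heq : V3.erase v = insert z₀ ((V.erase b).erase v) := by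
        rw [hV3]; exact Finset.erase_insert_of_ne hz₀v
      rw [heq] at h1
      refine LH_insert_subset ?_ (Finset.erase_subset_erase _ (Finset.erase_subset _ _)) h1
      by_cases hva : v = a
      · subst hva; exact hz₀a
      · exact hz₀c v hv hva hvb


lemma main : ∀ (N : ℕ) (V : Finset (Fin d → ℤ)), mu V ≤ N → V.card = 2 ^ d + 1 →
    ∃ z, ∀ v ∈ V, toR z ∈ LH (V.erase v) := by
  intro N
  induction N with
  | zero =>
    intro V hmu hcard
    exfalso
    have hne : V.Nonempty := Finset.card_pos.1 (by rw [hcard]; positivity)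
    obtain ⟨v, hv⟩ := hne
    have hm : v ∈ (latFin V).toFinset := (mem_muset V v).2 (mem_LH_of_mem hv)
    have : 0 < mu V := Finset.card_pos.2 ⟨v, hm⟩
    omega
  | succ N ih =>
    intro V hmu hcard
    by_cases hdep : ∃ c ∈ V, toR c ∈ LH (V.erase c)
    · obtain ⟨c, hc, hcc⟩ := hdep
      refine ⟨c, fun v hv => ?_⟩
      by_cases hvc : v = c
      · rw [hvc]; exact hcc
      · exact mem_LH_of_mem (Finset.mem_erase.2 ⟨fun h => hvc h.symm, hc⟩)
    · push_neg at hdep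
      have hfin2 : Fintype.card (Fin d → ZMod 2) = 2 ^ d := by
        rw [Fintype.card_fun]
        simp
      have hcardlt : (Finset.univ : Finset (Fin d → ZMod 2)).card < V.card := by
        rw [Finset.card_univ, hfin2, hcard]
        omega
      obtain ⟨a, ha, b, hb, hab, habm⟩ :=
        Finset.exists_ne_map_eq_of_card_lt_of_maps_to hcardlt
          (fun v _ => Finset.mem_univ (fun j => ((v j : ℤ) : ZMod 2)))
      have hdvd : ∀ j, (2 : ℤ) ∣ (a j + b j) := by
        intro j
        have h1 : ((a j : ℤ) : ZMod 2) = ((b j : ℤ) : ZMod 2) := congrFun habm j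
        have h2 : (((a j + b j : ℤ)) : ZMod 2) = 0 := by
          push_cast
          rw [h1]
          exact CharTwo.add_self_eq_zero _
        exact (ZMod.intCast_zmod_eq_zero_iff_dvd _ 2).1 h2
      set y : Fin d → ℤ := fun j => (a j + b j) / 2 with hy
      have h2y : ∀ j, 2 * y j = a j + b j := fun j => Int.mul_ediv_cancel' (hdvd j)
      have hyV : y ∉ V := by
        intro hyVmem
        by_cases h1 : y = a
        · apply hab; funext j
          have h3 := h2y j
          rw [h1] at h3
          omega
        by_cases h2 : y = b
        · apply hab; funext j
          have h3 := h2y j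
          rw [h2] at h3
          omega
        apply hdep y hyVmem
        exact mid_mem h2y (convex_convexHull _ _)
          (mem_LH_of_mem (Finset.mem_erase.2 ⟨fun h => h1 h.symm, ha⟩))
          (mem_LH_of_mem (Finset.mem_erase.2 ⟨fun h => h2 h.symm, hb⟩))
      have IH' : ∀ W : Finset (Fin d → ℤ), mu W < mu V → W.card = 2 ^ d + 1 →
          ∃ z, ∀ v ∈ W, toR z ∈ LH (W.erase v) :=
        fun W hW hcW => ih W (by omega) hcW
      by_cases hA : toR y ∈ LH (V.erase a)
      · by_cases hB : toR y ∈ LH (V.erase b)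
        · refine ⟨y, fun v hv => ?_⟩
          by_cases hva : v = a
          · rw [hva]; exact hA
          by_cases hvb : v = b
          · rw [hvb]; exact hB
          exact mid_mem h2y (convex_convexHull _ _)
            (mem_LH_of_mem (Finset.mem_erase.2 ⟨fun h => hva h.symm, ha⟩))
            (mem_LH_of_mem (Finset.mem_erase.2 ⟨fun h => hvb h.symm, hb⟩))
        · exact aux V IH' hcard hdep hb ha (Ne.symm hab)
            (fun j => by rw [h2y j]; ring) hyV hB
      · exact aux V IH' hcard hdep ha hb hab h2y hyV hA

end DoignonAux

/-- Doignon's theorem: the Helly number of `ℤ^d` is at most `2^d`. -/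
theorem doignon (d : ℕ) (ι : Type) [Fintype ι] (F : ι → Set (Fin d → ℝ))
    (hFconv : ∀ i, Convex ℝ (F i))
    (hFcard : 2 ^ d ≤ Fintype.card ι)
    (hF : ∀ G : Finset ι, G.card = 2 ^ d →
      ∃ p : Fin d → ℝ, (∀ j, ∃ z : ℤ, p j = (z : ℝ)) ∧ ∀ i ∈ G, p ∈ F i) :
    ∃ p : Fin d → ℝ, (∀ j, ∃ z : ℤ, p j = (z : ℝ)) ∧ ∀ i, p ∈ F i := by
  classical
  open DoignonAux in
  have step : ∀ k, 2 ^ d ≤ k → ∀ S : Finset ι, S.card = k →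
      ∃ p : Fin d → ℝ, (∀ j, ∃ z : ℤ, p j = (z : ℝ)) ∧ ∀ i ∈ S, p ∈ F i := by
    intro k hk
    induction k, hk using Nat.le_induction with
    | base => exact hF
    | succ k hk ihk =>
      intro S hS
      -- pick, for each i ∈ S, a common lattice point of the others
      have hpick : ∀ i ∈ S, ∃ p : Fin d → ℝ,
          (∀ j, ∃ z : ℤ, p j = (z : ℝ)) ∧ ∀ l ∈ S.erase i, p ∈ F l := by
        intro i hi
        exact ihk (S.erase i) (by rw [Finset.card_erase_of_mem hi, hS]; omega)
      choose! p hpLat hpMem using hpick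
      -- integer versions
      have hq : ∀ i ∈ S, ∃ z : Fin d → ℤ, DoignonAux.toR z = p i := by
        intro i hi
        exact ⟨fun j => (hpLat i hi j).choose,
          funext fun j => ((hpLat i hi j).choose_spec).symm⟩
      choose! q hq using hq
      by_cases hinj : ∀ i ∈ S, ∀ j ∈ S, q i = q j → i = j
      · -- the q i are distinct
        set V : Finset (Fin d → ℤ) := S.image q with hV
        have hVcard : V.card = k + 1 := by
          rw [hV, Finset.card_image_of_injOn (fun i hi j hj h => hinj i hi j hj h), hS]
        obtain ⟨W, hWV, hWcard⟩ := Finset.exists_subset_card_eq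
          (show 2 ^ d + 1 ≤ V.card by rw [hVcard]; omega)
        obtain ⟨z, hz⟩ := DoignonAux.main (DoignonAux.mu W) W le_rfl hWcard
        refine ⟨DoignonAux.toR z, fun j => ⟨z j, rfl⟩, fun i hi => ?_⟩
        have hTsub : ∀ v ∈ V, v ≠ q i → DoignonAux.toR v ∈ F i := by
          intro v hv hvne
          rw [hV, Finset.mem_image] at hv
          obtain ⟨l, hl, rfl⟩ := hv
          have hli : l ≠ i := fun h => hvne (by rw [h])
          rw [hq l hl]
          exact hpMem l hl i (Finset.mem_erase.2 ⟨fun h => hli h.symm, hi⟩)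
        by_cases hqi : q i ∈ W
        · have h1 := hz (q i) hqi
          refine convexHull_min ?_ (hFconv i) h1
          rintro _ ⟨v, hv, rfl⟩
          have hv' : v ∈ W.erase (q i) := by exact_mod_cast hv
          exact hTsub v (hWV (Finset.mem_of_mem_erase hv'))
            (Finset.ne_of_mem_erase hv')
        · have hWne : W.Nonempty := Finset.card_pos.1 (by rw [hWcard]; positivity)
          obtain ⟨w₀, hw₀⟩ := hWne
          have h1 := hz w₀ hw₀
          refine convexHull_min ?_ (hFconv i) h1
          rintro _ ⟨v, hv, rfl⟩
          have hv' : v ∈ W.erase w₀ := by exact_mod_cast hv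
          have hvW : v ∈ W := Finset.mem_of_mem_erase hv'
          exact hTsub v (hWV hvW) (fun h => hqi (h ▸ hvW))
      · -- two coincide : that point lies in every member of S
        push_neg at hinj
        obtain ⟨i, hi, j, hj, hqij, hij⟩ := hinj
        have hpij : p i = p j := by rw [← hq i hi, ← hq j hj, hqij]
        refine ⟨p i, hpLat i hi, fun l hl => ?_⟩
        by_cases hli : l = i
        · rw [hpij]
          exact hpMem j hj l (Finset.mem_erase.2 ⟨fun h => hij (by rw [← hli, h]), hl⟩)
        · exact hpMem i hi l (Finset.mem_erase.2 ⟨hli, hl⟩)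
  obtain ⟨p, hLat, hMem⟩ := step (Fintype.card ι) hFcard Finset.univ (Finset.card_univ)
  exact ⟨p, hLat, fun i => hMem i (Finset.mem_univ i)⟩
end

section
/- Let S ⊆ ℝ^d be a discrete set (every point of ℝ^d has a neighborhood containing at most one point of S), and suppose there exist n distinct points q₁, …, q_n of S in convex position (each q_i a vertex of the convex hull of {q₁,…,q_n}) such that the convex hull of {q₁,…,q_n} contains no point of S other than q₁, …, q_n. Then the Helly number of S is at least n: there exists a family of n convex subsets of ℝ^d such that every n−1 of them have a common point belonging to S, but no point of S belongs to all n of them. -/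
/-- If a discrete set `S ⊆ ℝ^d` admits an empty convex polytope with `n` vertices in `S`,
then the Helly number of `S` is at least `n`. -/
theorem helly_number_lower_bound_of_empty_polytope (d n : ℕ) (hn : 1 ≤ n)
    (S : Set (Fin d → ℝ))
    (hdisc : ∀ x : Fin d → ℝ, ∃ U ∈ nhds x, (S ∩ U).Subsingleton)
    (q : Fin n → (Fin d → ℝ))
    (hinj : Function.Injective q)
    (hqS : ∀ i, q i ∈ S)
    (hvert : ∀ i, q i ∉ convexHull ℝ (q '' {j | j ≠ i}))
    (hempty : ∀ p ∈ S, p ∈ convexHull ℝ (Set.range q) → ∃ i, p = q i) :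
    ∃ F : Fin n → Set (Fin d → ℝ),
      (∀ i, Convex ℝ (F i)) ∧
      (∀ G : Finset (Fin n), G.card = n - 1 → ∃ p ∈ S, ∀ i ∈ G, p ∈ F i) ∧
      ¬ ∃ p ∈ S, ∀ i, p ∈ F i := by
  refine ⟨fun i => convexHull ℝ (q '' {j | j ≠ i}), fun i => convex_convexHull ℝ _, ?_, ?_⟩
  · intro G hG
    have hGc : G ≠ Finset.univ := by
      intro h
      rw [h, Finset.card_univ, Fintype.card_fin] at hG
      omega
    obtain ⟨i, hi⟩ : ∃ i, i ∉ G := by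
      by_contra h
      push_neg at h
      exact hGc (Finset.eq_univ_iff_forall.mpr h)
    refine ⟨q i, hqS i, fun j hj => ?_⟩
    exact subset_convexHull ℝ _ ⟨i, fun h => hi (h ▸ hj), rfl⟩
  · rintro ⟨p, hpS, hp⟩
    have hpr : p ∈ convexHull ℝ (Set.range q) := by
      obtain ⟨i0⟩ : Nonempty (Fin n) := ⟨⟨0, hn⟩⟩
      exact convexHull_mono (Set.image_subset_range _ _) (hp i0)
    obtain ⟨i, rfl⟩ := hempty p hpS hpr
    exact hvert i (hp i)
end
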